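/- arXiv:1805.10071 — 2 statements merged into one kernel-verified Lean document; each statement's English description precedes it below -/
import Mathlib

section
/- Almost surely, liminf_{n→∞} M_n > 0; in particular, on the almost sure event where M_n converges, the limit M = lim_{n→∞} M_n satisfies M > 0. -/
open MeasureTheory ProbabilityTheory Filter Set Topology

noncomputable section

/-- `γ_n = γ₀ + 4 n`. -/
def rpsGamma (γ₀ : ℝ) (n : ℕ) : ℝ := γ₀ + 4 * n

/-- The increments to the (unnormalised) degrees of the three types
for each of the six possible transitions. -/
def rpsIncr : Fin 6 → ℝ × ℝ × ℝ
  | 0 => (4, 0, 0)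
  | 1 => (0, 4, 0)
  | 2 => (0, 0, 4)
  | 3 => (1, 3, 0)
  | 4 => (0, 1, 3)
  | 5 => (3, 0, 1)

/-- The conditional probability of each of the six possible transitions,
as a function of the current state `(x, y, z)`. -/
def rpsProb (i : Fin 6) (x y z : ℝ) : ℝ :=
  match i with
  | 0 => x ^ 2
  | 1 => y ^ 2
  | 2 => z ^ 2
  | 3 => 2 * x * y
  | 4 => 2 * y * z
  | 5 => 2 * z * x

/-- The rock–paper–scissors preferential attachment chain: an adapted process
`(X n, Y n, Z n)` with values in the simplex `Δ²`, deterministic strictly positive initial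
condition and, conditionally on `𝔉 n`, the six possible transitions have the prescribed
probabilities. -/
structure RPSChain {Ω : Type*} [MeasurableSpace Ω] (μ : Measure Ω) (γ₀ : ℝ) where
  F : Filtration ℕ ‹MeasurableSpace Ω›
  X : ℕ → Ω → ℝ
  Y : ℕ → Ω → ℝ
  Z : ℕ → Ω → ℝ
  adapted_X : Adapted F X
  adapted_Y : Adapted F Y
  adapted_Z : Adapted F Z
  nonneg_X : ∀ n ω, 0 ≤ X n ω
  nonneg_Y : ∀ n ω, 0 ≤ Y n ω
  nonneg_Z : ∀ n ω, 0 ≤ Z n ω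
  sum_eq_one : ∀ n ω, X n ω + Y n ω + Z n ω = 1
  init_X_pos : ∀ ω, 0 < X 0 ω
  init_Y_pos : ∀ ω, 0 < Y 0 ω
  init_Z_pos : ∀ ω, 0 < Z 0 ω
  init_X_const : ∀ ω ω', X 0 ω = X 0 ω'
  init_Y_const : ∀ ω ω', Y 0 ω = Y 0 ω'
  init_Z_const : ∀ ω ω', Z 0 ω = Z 0 ω'
  step : ∀ (n : ℕ) (i : Fin 6),
    μ[Set.indicator
        {ω | X (n+1) ω = (rpsGamma γ₀ n * X n ω + (rpsIncr i).1) / rpsGamma γ₀ (n+1) ∧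
             Y (n+1) ω = (rpsGamma γ₀ n * Y n ω + (rpsIncr i).2.1) / rpsGamma γ₀ (n+1) ∧
             Z (n+1) ω = (rpsGamma γ₀ n * Z n ω + (rpsIncr i).2.2) / rpsGamma γ₀ (n+1)}
        (fun _ => (1 : ℝ)) | F n]
      =ᵐ[μ] fun ω => rpsProb i (X n ω) (Y n ω) (Z n ω)

def Gf (κ u : ℝ) : ℝ := κ * (1 - 1 / Real.sqrt (1 + u))

lemma sqrt_ge_one {u : ℝ} (hu : 0 ≤ u) : 1 ≤ Real.sqrt (1 + u) := by
  nlinarith [Real.sq_sqrt (show (0:ℝ) ≤ 1 + u by linarith), Real.sqrt_nonneg (1 + u)]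

lemma Gf_nonneg {κ u : ℝ} (hκ : 0 ≤ κ) (hu : 0 ≤ u) : 0 ≤ Gf κ u := by
  have h1 := sqrt_ge_one hu
  have h2 : 1 / Real.sqrt (1 + u) ≤ 1 := by
    rw [div_le_one (by linarith)]; linarith
  unfold Gf; nlinarith

lemma Gf_le {κ u : ℝ} (hκ : 0 ≤ κ) (hu : 0 ≤ u) : Gf κ u ≤ κ := by
  have h1 : 0 < Real.sqrt (1 + u) := Real.sqrt_pos.2 (by linarith)
  have h2 : 0 ≤ 1 / Real.sqrt (1 + u) := by positivity
  unfold Gf; nlinarith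

lemma Gf_mono {κ u v : ℝ} (hκ : 0 ≤ κ) (hu : 0 ≤ u) (huv : u ≤ v) : Gf κ u ≤ Gf κ v := by
  have h1 : 0 < Real.sqrt (1 + u) := Real.sqrt_pos.2 (by linarith)
  have h3 : Real.sqrt (1 + u) ≤ Real.sqrt (1 + v) := Real.sqrt_le_sqrt (by linarith)
  have h4 : 1 / Real.sqrt (1 + v) ≤ 1 / Real.sqrt (1 + u) :=
    one_div_le_one_div_of_le h1 h3
  unfold Gf; nlinarith

set_option maxHeartbeats 1000000 in
lemma Gf_gap {κ cc u : ℝ} (h0 : 0 < cc) (h1 : cc ≤ 1) (hκ : κ = 324 / cc ^ 2)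
    (hu : cc ≤ u) : 18 / u ^ 2 ≤ Gf κ (u + 1) - Gf κ u := by
  have hu0 : 0 < u := lt_of_lt_of_le h0 hu
  set s := Real.sqrt (1 + u) with hs_def
  set t := Real.sqrt (2 + u) with ht_def
  have hs2 : s ^ 2 = 1 + u := Real.sq_sqrt (by linarith)
  have ht2 : t ^ 2 = 2 + u := Real.sq_sqrt (by linarith)
  have hs0 : 0 < s := Real.sqrt_pos.2 (by linarith)
  have ht0 : 0 < t := Real.sqrt_pos.2 (by linarith)
  have hst : s ≤ t := Real.sqrt_le_sqrt (by linarith)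
  have hκ0 : 0 ≤ κ := by rw [hκ]; positivity
  have hGdiff : Gf κ (u + 1) - Gf κ u = κ * (1 / s - 1 / t) := by
    unfold Gf
    rw [show (1 : ℝ) + (u + 1) = 2 + u by ring]
    ring
  rw [hGdiff]
  have hts : (t - s) * (t + s) = 1 := by nlinarith
  have h8 : t - s = 1 / (t + s) := by
    rw [eq_div_iff (by positivity)]; exact hts
  have hinv : 1 / (2 * t ^ 3) ≤ 1 / s - 1 / t := by
    have h9 : 1 / (2 * t) ≤ 1 / (t + s) := one_div_le_one_div_of_le (by positivity) (by linarith)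
    have h10 : 1 / s - 1 / t = (t - s) * (1 / (s * t)) := by
      field_simp
    have h11 : 1 / (t * t) ≤ 1 / (s * t) := one_div_le_one_div_of_le (by positivity)
      (by nlinarith)
    have h12 : (0:ℝ) < 1 / (t * t) := by positivity
    calc 1 / (2 * t ^ 3) = (1 / (2 * t)) * (1 / (t * t)) := by
          rw [div_mul_div_comm]; ring_nf
      _ ≤ (t - s) * (1 / (s * t)) := by
          apply mul_le_mul (h8 ▸ h9) h11 h12.le (by rw [h8]; positivity)
      _ = 1 / s - 1 / t := h10.symm
  have hcube : t ^ 3 * cc ^ 2 ≤ 9 * u ^ 2 := by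
    have hc2 : (2 + u) ^ 3 * cc ^ 4 ≤ 81 * u ^ 4 := by
      rcases le_total u 1 with h | h
      · have e1 : cc ^ 4 ≤ u ^ 4 := pow_le_pow_left₀ h0.le hu 4
        have hu2 : u ^ 2 ≤ 1 := by nlinarith
        have hu3 : u ^ 3 ≤ 1 := by nlinarith
        have e2 : (2 + u) ^ 3 ≤ 27 := by nlinarith
        have e3 : (0:ℝ) ≤ cc ^ 4 := by positivity
        nlinarith
      · have e1 : cc ^ 4 ≤ 1 := pow_le_one₀ h0.le h1
        have e2 : (2 + u) ^ 3 ≤ (3 * u) ^ 3 :=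
          pow_le_pow_left₀ (by linarith) (by linarith) 3
        have e4 : u ^ 3 ≤ u ^ 4 := by nlinarith
        have e5 : (0:ℝ) ≤ (2+u)^3 := by positivity
        nlinarith
    have hA : 0 ≤ t ^ 3 * cc ^ 2 := by positivity
    have hB : (0:ℝ) ≤ 9 * u ^ 2 := by positivity
    have hsq : (t ^ 3 * cc ^ 2) ^ 2 ≤ (9 * u ^ 2) ^ 2 := by
      have ht6 : (t ^ 3) ^ 2 = (2 + u) ^ 3 := by rw [← ht2]; ring
      calc (t ^ 3 * cc ^ 2) ^ 2 = (t ^ 3) ^ 2 * cc ^ 4 := by ring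
        _ = (2 + u) ^ 3 * cc ^ 4 := by rw [ht6]
        _ ≤ 81 * u ^ 4 := hc2
        _ = (9 * u ^ 2) ^ 2 := by ring
    exact (pow_le_pow_iff_left₀ hA hB two_ne_zero).mp hsq
  have hcc2 : (0:ℝ) < cc ^ 2 := by positivity
  calc 18 / u ^ 2 ≤ κ / (2 * t ^ 3) := by
        rw [hκ, div_le_div_iff₀ (by positivity) (by positivity), div_mul_eq_mul_div,
          le_div_iff₀ hcc2]
        nlinarith [hcube]
    _ = κ * (1 / (2 * t ^ 3)) := by ring
    _ ≤ κ * (1 / s - 1 / t) := mul_le_mul_of_nonneg_left hinv hκ0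

lemma log_quad {u a : ℝ} (hu : 0 < u) (ha : 0 ≤ a) :
    a / u - (a / u) ^ 2 ≤ Real.log (u + a) - Real.log u := by
  have h1 : Real.log (u + a) - Real.log u = Real.log ((u + a) / u) := by
    rw [Real.log_div (by positivity) (ne_of_gt hu)]
  rw [h1]
  have h2 : (u + a) / u = 1 + a / u := by field_simp
  rw [h2]
  set t := a / u with ht_def
  have ht : 0 ≤ t := by positivity
  have h3 : Real.log (1 + t)⁻¹ ≤ (1 + t)⁻¹ - 1 :=
    Real.log_le_sub_one_of_pos (by positivity)
  rw [Real.log_inv] at h3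
  have h5 : (1 + t)⁻¹ * (1 + t) = 1 := inv_mul_cancel₀ (by positivity)
  have h6 : 0 ≤ (1 + t)⁻¹ := by positivity
  nlinarith [h5, ht, h6, pow_nonneg ht 3]

lemma log_lin {γ : ℝ} (hγ : 0 < γ) : Real.log (γ + 4) - Real.log γ ≤ 4 / γ := by
  have h1 : Real.log (γ + 4) - Real.log γ = Real.log ((γ + 4) / γ) := by
    rw [Real.log_div (by positivity) (ne_of_gt hγ)]
  rw [h1]
  have h2 := Real.log_le_sub_one_of_pos (show (0:ℝ) < (γ + 4)/γ by positivity)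
  have h3 : (γ + 4) / γ - 1 = 4 / γ := by field_simp; ring
  linarith
-- per-coordinate lemma
lemma coord_key {γ cc κ x y z : ℝ} (hγ : 2 ≤ γ) (h0 : 0 < cc) (h1 : cc ≤ 1)
    (hκ : κ = 324 / cc ^ 2) (hy : 0 ≤ y) (hz : 0 ≤ z) (hcx : cc ≤ γ * x) :
    (4 * x + 2 * y + 6 * z) / γ ≤
      x ^ 2 * ((Real.log (γ * x + 4) - Real.log (γ * x)) + (Gf κ (γ * x + 4) - Gf κ (γ * x)))
      + 2 * x * y * ((Real.log (γ * x + 1) - Real.log (γ * x)) + (Gf κ (γ * x + 1) - Gf κ (γ * x)))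
      + 2 * z * x * ((Real.log (γ * x + 3) - Real.log (γ * x)) + (Gf κ (γ * x + 3) - Gf κ (γ * x))) := by
  have hγ0 : (0:ℝ) < γ := by linarith
  set u := γ * x with hu_def
  have hu0 : 0 < u := lt_of_lt_of_le h0 hcx
  have hx0 : 0 < x := by
    rcases lt_trichotomy x 0 with h | h | h
    · nlinarith
    · exfalso; rw [hu_def] at hu0; nlinarith
    · exact h
  have hκ0 : 0 ≤ κ := by rw [hκ]; positivity
  have hgap : 18 / u ^ 2 ≤ Gf κ (u + 1) - Gf κ u := Gf_gap h0 h1 hκ hcx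
  have hm3 : Gf κ (u + 1) ≤ Gf κ (u + 3) := Gf_mono hκ0 (by linarith) (by linarith)
  have hm4 : Gf κ (u + 1) ≤ Gf κ (u + 4) := Gf_mono hκ0 (by linarith) (by linarith)
  have hl4 := log_quad hu0 (show (0:ℝ) ≤ 4 by norm_num)
  have hl1 := log_quad hu0 (show (0:ℝ) ≤ 1 by norm_num)
  have hl3 := log_quad hu0 (show (0:ℝ) ≤ 3 by norm_num)
  -- bounds on each bracket
  have hA : (4 * u + 2) / u ^ 2 ≤
      (Real.log (u + 4) - Real.log u) + (Gf κ (u + 4) - Gf κ u) := by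
    have e : 4 / u - (4 / u) ^ 2 = (4 * u - 16) / u ^ 2 := by field_simp; ring
    have e2 : (4 * u + 2) / u ^ 2 = (4 * u - 16) / u ^ 2 + 18 / u ^ 2 := by
      rw [← add_div]; ring_nf
    linarith [hl4, hgap, hm4, e ▸ hl4]
  have hB : (u + 17) / u ^ 2 ≤
      (Real.log (u + 1) - Real.log u) + (Gf κ (u + 1) - Gf κ u) := by
    have e : 1 / u - (1 / u) ^ 2 = (u - 1) / u ^ 2 := by field_simp
    have e2 : (u + 17) / u ^ 2 = (u - 1) / u ^ 2 + 18 / u ^ 2 := by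
      rw [← add_div]; ring_nf
    linarith [e ▸ hl1, hgap]
  have hC : (3 * u + 9) / u ^ 2 ≤
      (Real.log (u + 3) - Real.log u) + (Gf κ (u + 3) - Gf κ u) := by
    have e : 3 / u - (3 / u) ^ 2 = (3 * u - 9) / u ^ 2 := by field_simp; ring
    have e2 : (3 * u + 9) / u ^ 2 = (3 * u - 9) / u ^ 2 + 18 / u ^ 2 := by
      rw [← add_div]; ring_nf
    linarith [e ▸ hl3, hgap, hm3]
  have hw1 : (0:ℝ) ≤ x ^ 2 := sq_nonneg x
  have hw2 : (0:ℝ) ≤ 2 * x * y := by positivity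
  have hw3 : (0:ℝ) ≤ 2 * z * x := by positivity
  have step1 : x ^ 2 * ((4 * u + 2) / u ^ 2) + 2 * x * y * ((u + 17) / u ^ 2)
      + 2 * z * x * ((3 * u + 9) / u ^ 2) ≤
      x ^ 2 * ((Real.log (u + 4) - Real.log u) + (Gf κ (u + 4) - Gf κ u))
      + 2 * x * y * ((Real.log (u + 1) - Real.log u) + (Gf κ (u + 1) - Gf κ u))
      + 2 * z * x * ((Real.log (u + 3) - Real.log u) + (Gf κ (u + 3) - Gf κ u)) := by
    gcongr
  have hune : u ≠ 0 := ne_of_gt hu0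
  have eq1 : (4 * x + 2 * y + 6 * z) / γ = (4 * x ^ 2 + 2 * x * y + 6 * z * x) / u := by
    rw [hu_def, div_eq_div_iff (ne_of_gt hγ0) (by positivity)]; ring
  have e' : x ^ 2 * ((4 * u + 2) / u ^ 2) + 2 * x * y * ((u + 17) / u ^ 2)
      + 2 * z * x * ((3 * u + 9) / u ^ 2)
      = (4 * x ^ 2 + 2 * x * y + 6 * z * x) / u
        + (2 * x ^ 2 + 34 * x * y + 18 * z * x) / u ^ 2 := by
    field_simp; ring
  have step0 : (4 * x + 2 * y + 6 * z) / γ ≤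
      x ^ 2 * ((4 * u + 2) / u ^ 2) + 2 * x * y * ((u + 17) / u ^ 2)
      + 2 * z * x * ((3 * u + 9) / u ^ 2) := by
    rw [e', eq1]
    have : (0:ℝ) ≤ (2 * x ^ 2 + 34 * x * y + 18 * z * x) / u ^ 2 := by positivity
    linarith
  linarith [step0, step1]
def rpsF (γ κ : ℝ) (v : ℝ × ℝ × ℝ) (x y z : ℝ) : ℝ :=
  3 * Real.log (γ + 4)
  - (Real.log (γ * x + v.1) + Real.log (γ * y + v.2.1) + Real.log (γ * z + v.2.2))
  - (Gf κ (γ * x + v.1) + Gf κ (γ * y + v.2.1) + Gf κ (γ * z + v.2.2))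

set_option maxHeartbeats 1000000 in
lemma rps_key {γ cc κ x y z : ℝ} (hγ : 2 ≤ γ) (h0 : 0 < cc) (h1 : cc ≤ 1)
    (hκ : κ = 324 / cc ^ 2) (hsum : x + y + z = 1)
    (hux : cc ≤ γ * x) (huy : cc ≤ γ * y) (huz : cc ≤ γ * z) :
    ∑ i : Fin 6, rpsProb i x y z * rpsF γ κ (rpsIncr i) x y z ≤
      3 * Real.log γ - (Real.log (γ * x) + Real.log (γ * y) + Real.log (γ * z))
      - (Gf κ (γ * x) + Gf κ (γ * y) + Gf κ (γ * z)) := by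
  have hγ0 : (0:ℝ) < γ := by linarith
  have hx0 : 0 < x := by nlinarith
  have hy0 : 0 < y := by nlinarith
  have hz0 : 0 < z := by nlinarith
  obtain rfl : z = 1 - x - y := by linarith
  have hWX := coord_key hγ h0 h1 hκ hy0.le hz0.le hux
  have hWY := coord_key (x := y) (y := 1 - x - y) (z := x) hγ h0 h1 hκ hz0.le hx0.le huy
  have hWZ := coord_key (x := 1 - x - y) (y := x) (z := y) hγ h0 h1 hκ hx0.le hy0.le huz
  have hlog := log_lin hγ0
  have expand : ∑ i : Fin 6, rpsProb i x y (1 - x - y) * rpsF γ κ (rpsIncr i) x y (1 - x - y)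
      = 3 * Real.log (γ + 4)
      - ((x ^ 2 * ((Real.log (γ * x + 4) - Real.log (γ * x)) + (Gf κ (γ * x + 4) - Gf κ (γ * x)))
          + 2 * x * y * ((Real.log (γ * x + 1) - Real.log (γ * x)) + (Gf κ (γ * x + 1) - Gf κ (γ * x)))
          + 2 * (1 - x - y) * x * ((Real.log (γ * x + 3) - Real.log (γ * x)) + (Gf κ (γ * x + 3) - Gf κ (γ * x))))
        + (y ^ 2 * ((Real.log (γ * y + 4) - Real.log (γ * y)) + (Gf κ (γ * y + 4) - Gf κ (γ * y)))
          + 2 * y * (1 - x - y) * ((Real.log (γ * y + 1) - Real.log (γ * y)) + (Gf κ (γ * y + 1) - Gf κ (γ * y)))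
          + 2 * x * y * ((Real.log (γ * y + 3) - Real.log (γ * y)) + (Gf κ (γ * y + 3) - Gf κ (γ * y))))
        + ((1 - x - y) ^ 2 * ((Real.log (γ * (1 - x - y) + 4) - Real.log (γ * (1 - x - y))) + (Gf κ (γ * (1 - x - y) + 4) - Gf κ (γ * (1 - x - y))))
          + 2 * (1 - x - y) * x * ((Real.log (γ * (1 - x - y) + 1) - Real.log (γ * (1 - x - y))) + (Gf κ (γ * (1 - x - y) + 1) - Gf κ (γ * (1 - x - y))))
          + 2 * y * (1 - x - y) * ((Real.log (γ * (1 - x - y) + 3) - Real.log (γ * (1 - x - y))) + (Gf κ (γ * (1 - x - y) + 3) - Gf κ (γ * (1 - x - y))))))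
      - (Real.log (γ * x) + Real.log (γ * y) + Real.log (γ * (1 - x - y)))
      - (Gf κ (γ * x) + Gf κ (γ * y) + Gf κ (γ * (1 - x - y))) := by
    simp only [Fin.sum_univ_six, rpsProb, rpsIncr, rpsF, add_zero]
    ring
  rw [expand]
  have h12 : (4 * x + 2 * y + 6 * (1 - x - y)) / γ + (4 * y + 2 * (1 - x - y) + 6 * x) / γ
      + (4 * (1 - x - y) + 2 * x + 6 * y) / γ = 12 / γ := by ring
  have hlog3 : 3 * Real.log (γ + 4) - 3 * Real.log γ ≤ 12 / γ := by
    have e : (3:ℝ) * (4 / γ) = 12 / γ := by ring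
    linarith [hlog]
  linarith [hWX, hWY, hWZ, hlog3, h12]
-- facts about increments
lemma rpsIncr_nonneg (i : Fin 6) :
    0 ≤ (rpsIncr i).1 ∧ 0 ≤ (rpsIncr i).2.1 ∧ 0 ≤ (rpsIncr i).2.2 := by
  fin_cases i <;> norm_num [rpsIncr]

lemma rpsIncr_le (i : Fin 6) :
    (rpsIncr i).1 ≤ 4 ∧ (rpsIncr i).2.1 ≤ 4 ∧ (rpsIncr i).2.2 ≤ 4 := by
  fin_cases i <;> norm_num [rpsIncr]

lemma rpsIncr_inj (i j : Fin 6) (h1 : (rpsIncr i).1 = (rpsIncr j).1)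
    (h2 : (rpsIncr i).2.1 = (rpsIncr j).2.1) : i = j := by
  fin_cases i <;> fin_cases j <;> simp_all [rpsIncr] <;> norm_num at h1 h2

lemma rpsProb_sum (x y z : ℝ) (h : x + y + z = 1) :
    ∑ i : Fin 6, rpsProb i x y z = 1 := by
  rw [Fin.sum_univ_six]
  show x^2 + y^2 + z^2 + 2*x*y + 2*y*z + 2*z*x = 1
  linear_combination (x + y + z + 1) * h

lemma rpsProb_bound (i : Fin 6) {x y z : ℝ} (hx : 0 ≤ x) (hy : 0 ≤ y) (hz : 0 ≤ z)
    (hx1 : x ≤ 1) (hy1 : y ≤ 1) (hz1 : z ≤ 1) : |rpsProb i x y z| ≤ 2 := by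
  fin_cases i <;> simp only [rpsProb] <;> rw [abs_le] <;> constructor <;> nlinarith

lemma rpsProb_nonneg (i : Fin 6) {x y z : ℝ} (hx : 0 ≤ x) (hy : 0 ≤ y) (hz : 0 ≤ z) :
    0 ≤ rpsProb i x y z := by
  fin_cases i <;> simp only [rpsProb] <;> positivity

lemma abs_log_bound {cc t d : ℝ} (h0 : 0 < cc) (h1 : cc ≤ 1) (ht : cc ≤ t) (htd : t ≤ d)
    (hd : 1 ≤ d) : |Real.log t| ≤ Real.log d - Real.log cc := by
  have ht0 : 0 < t := lt_of_lt_of_le h0 ht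
  have hlc : Real.log cc ≤ 0 := Real.log_nonpos h0.le h1
  have hld : 0 ≤ Real.log d := Real.log_nonneg hd
  have h2 : Real.log t ≤ Real.log d := Real.log_le_log ht0 htd
  have h3 : Real.log cc ≤ Real.log t := Real.log_le_log h0 ht
  rw [abs_le]; constructor <;> linarith
def rpsV (γ₀ κ : ℝ) {Ω : Type*} (X Y Z : ℕ → Ω → ℝ) (n : ℕ) (ω : Ω) : ℝ :=
  - Real.log (X n ω * Y n ω * Z n ω)
  - (Gf κ (rpsGamma γ₀ n * X n ω) + Gf κ (rpsGamma γ₀ n * Y n ω)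
     + Gf κ (rpsGamma γ₀ n * Z n ω))


set_option maxHeartbeats 4000000 in
/-- Almost surely `liminf M_n > 0`; in particular any almost sure limit of `M_n`
is `> 0`. -/
theorem rps_liminf_pos
    {Ω : Type*} [MeasurableSpace Ω] (μ : Measure Ω) [IsProbabilityMeasure μ]
    (γ₀ : ℝ) (hγ₀ : 2 ≤ γ₀) (c : RPSChain μ γ₀) :
    ∀ᵐ ω ∂μ,
      0 < liminf (fun n => c.X n ω * c.Y n ω * c.Z n ω) atTop ∧
      (∀ M : ℝ, Tendsto (fun n => c.X n ω * c.Y n ω * c.Z n ω) atTop (𝓝 M) → 0 < M) := by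
  classical
  -- nonempty
  have hne : Nonempty Ω := by
    by_contra h
    rw [not_nonempty_iff] at h
    have h1 : μ Set.univ = 1 := measure_univ
    rw [Set.univ_eq_empty_iff.mpr h] at h1
    simp at h1
  obtain ⟨ω₀⟩ := hne
  -- gamma facts
  have hγ2 : ∀ n, 2 ≤ rpsGamma γ₀ n := by
    intro n
    have : (0:ℝ) ≤ 4 * n := by positivity
    simp only [rpsGamma]; linarith
  have hγpos : ∀ n, 0 < rpsGamma γ₀ n := fun n => lt_of_lt_of_le two_pos (hγ2 n)
  have hγmono : ∀ n, rpsGamma γ₀ n + 4 = rpsGamma γ₀ (n + 1) := by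
    intro n; simp only [rpsGamma]; push_cast; ring
  -- constants
  set cc : ℝ := min 1 (γ₀ * min (c.X 0 ω₀) (min (c.Y 0 ω₀) (c.Z 0 ω₀))) with hccdef
  have hcc0 : 0 < cc := by
    apply lt_min one_pos
    have h1 : 0 < γ₀ := by linarith
    have := c.init_X_pos ω₀; have := c.init_Y_pos ω₀; have := c.init_Z_pos ω₀
    have : 0 < min (c.X 0 ω₀) (min (c.Y 0 ω₀) (c.Z 0 ω₀)) := lt_min ‹_› (lt_min ‹_› ‹_›)
    positivity
  have hcc1 : cc ≤ 1 := min_le_left _ _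
  set κ : ℝ := 324 / cc ^ 2 with hκdef
  have hκ0 : 0 ≤ κ := by positivity
  -- measurability of processes
  have hXm : ∀ n, Measurable (c.X n) := fun n =>
    (c.adapted_X n).mono (c.F.le n) le_rfl
  have hYm : ∀ n, Measurable (c.Y n) := fun n =>
    (c.adapted_Y n).mono (c.F.le n) le_rfl
  have hZm : ∀ n, Measurable (c.Z n) := fun n =>
    (c.adapted_Z n).mono (c.F.le n) le_rfl
  -- bounds 0 ≤ X ≤ 1 pointwise
  have hX01 : ∀ n ω, c.X n ω ≤ 1 := fun n ω => by
    have := c.sum_eq_one n ω; have := c.nonneg_Y n ω; have := c.nonneg_Z n ω; linarith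
  have hY01 : ∀ n ω, c.Y n ω ≤ 1 := fun n ω => by
    have := c.sum_eq_one n ω; have := c.nonneg_X n ω; have := c.nonneg_Z n ω; linarith
  have hZ01 : ∀ n ω, c.Z n ω ≤ 1 := fun n ω => by
    have := c.sum_eq_one n ω; have := c.nonneg_X n ω; have := c.nonneg_Y n ω; linarith
  -- the transition sets
  set A : ℕ → Fin 6 → Set Ω := fun n i =>
    {ω | c.X (n+1) ω = (rpsGamma γ₀ n * c.X n ω + (rpsIncr i).1) / rpsGamma γ₀ (n+1) ∧
         c.Y (n+1) ω = (rpsGamma γ₀ n * c.Y n ω + (rpsIncr i).2.1) / rpsGamma γ₀ (n+1) ∧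
         c.Z (n+1) ω = (rpsGamma γ₀ n * c.Z n ω + (rpsIncr i).2.2) / rpsGamma γ₀ (n+1)}
      with hAdef
  have hstep : ∀ n i, μ[(A n i).indicator (fun _ => (1:ℝ))|c.F n]
      =ᵐ[μ] fun ω => rpsProb i (c.X n ω) (c.Y n ω) (c.Z n ω) := fun n i => c.step n i
  have hAmeas : ∀ n i, MeasurableSet (A n i) := by
    intro n i
    have e : A n i = {ω | c.X (n+1) ω = (rpsGamma γ₀ n * c.X n ω + (rpsIncr i).1) / rpsGamma γ₀ (n+1)}
        ∩ ({ω | c.Y (n+1) ω = (rpsGamma γ₀ n * c.Y n ω + (rpsIncr i).2.1) / rpsGamma γ₀ (n+1)}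
        ∩ {ω | c.Z (n+1) ω = (rpsGamma γ₀ n * c.Z n ω + (rpsIncr i).2.2) / rpsGamma γ₀ (n+1)}) := by
      ext ω; simp [hAdef, Set.mem_setOf_eq, Set.mem_inter_iff]
    rw [e]
    refine MeasurableSet.inter ?_ (MeasurableSet.inter ?_ ?_)
    · exact measurableSet_eq_fun (hXm (n+1))
        (((measurable_const.mul (hXm n)).add_const _).div_const _)
    · exact measurableSet_eq_fun (hYm (n+1))
        (((measurable_const.mul (hYm n)).add_const _).div_const _)
    · exact measurableSet_eq_fun (hZm (n+1))
        (((measurable_const.mul (hZm n)).add_const _).div_const _)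
  -- disjointness
  have hdisj : ∀ n, Pairwise (Function.onFun Disjoint (A n)) := by
    intro n i j hij
    rw [Function.onFun, Set.disjoint_left]
    intro ω hi hj
    apply hij
    apply rpsIncr_inj i j
    · have e1 := hi.1; have e2 := hj.1
      have := (hγpos (n+1)).ne'
      have e3 : (rpsGamma γ₀ n * c.X n ω + (rpsIncr i).1) / rpsGamma γ₀ (n+1)
          = (rpsGamma γ₀ n * c.X n ω + (rpsIncr j).1) / rpsGamma γ₀ (n+1) := by
        rw [← e1, ← e2]
      field_simp at e3
      linarith
    · have e1 := hi.2.1; have e2 := hj.2.1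
      have := (hγpos (n+1)).ne'
      have e3 : (rpsGamma γ₀ n * c.Y n ω + (rpsIncr i).2.1) / rpsGamma γ₀ (n+1)
          = (rpsGamma γ₀ n * c.Y n ω + (rpsIncr j).2.1) / rpsGamma γ₀ (n+1) := by
        rw [← e1, ← e2]
      field_simp at e3
      linarith
  
  -- integrability of the probability functions
  have hPm : ∀ n (i : Fin 6), Measurable (fun ω => rpsProb i (c.X n ω) (c.Y n ω) (c.Z n ω)) := by
    intro n i
    fin_cases i <;> simp only [rpsProb] <;> fun_prop
  have hPint : ∀ n (i : Fin 6),
      Integrable (fun ω => rpsProb i (c.X n ω) (c.Y n ω) (c.Z n ω)) μ := by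
    intro n i
    refine Integrable.mono' (integrable_const (2:ℝ)) (hPm n i).aestronglyMeasurable
      (ae_of_all _ fun ω => ?_)
    rw [Real.norm_eq_abs]
    exact rpsProb_bound i (c.nonneg_X n ω) (c.nonneg_Y n ω) (c.nonneg_Z n ω)
      (hX01 n ω) (hY01 n ω) (hZ01 n ω)
  -- the union of transition sets has full measure
  have hQ : ∀ᵐ ω ∂μ, ∀ n, ω ∈ ⋃ i, A n i := by
    rw [ae_all_iff]
    intro n
    have hmeasU : MeasurableSet (⋃ i, A n i) := MeasurableSet.iUnion (hAmeas n)
    have hsum1 : ∑ i : Fin 6, (μ (A n i)).toReal = 1 := by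
      have h1 : ∀ i : Fin 6, (μ (A n i)).toReal
          = ∫ ω, rpsProb i (c.X n ω) (c.Y n ω) (c.Z n ω) ∂μ := by
        intro i
        have e1 : ∫ ω, (A n i).indicator (fun _ => (1:ℝ)) ω ∂μ = (μ (A n i)).toReal := by
          rw [show (fun _ : Ω => (1:ℝ)) = 1 from rfl]
          exact integral_indicator_one (hAmeas n i)
        have e2 : ∫ ω, (μ[(A n i).indicator (fun _ => (1:ℝ))|c.F n]) ω ∂μ
            = ∫ ω, (A n i).indicator (fun _ => (1:ℝ)) ω ∂μ := integral_condExp (c.F.le n)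
        have e3 : ∫ ω, (μ[(A n i).indicator (fun _ => (1:ℝ))|c.F n]) ω ∂μ
            = ∫ ω, rpsProb i (c.X n ω) (c.Y n ω) (c.Z n ω) ∂μ :=
          integral_congr_ae (hstep n i)
        rw [← e1, ← e2, e3]
      rw [Finset.sum_congr rfl (fun i _ => h1 i)]
      rw [← integral_finset_sum _ (fun i _ => hPint n i)]
      have e4 : ∀ ω, ∑ i : Fin 6, rpsProb i (c.X n ω) (c.Y n ω) (c.Z n ω) = 1 :=
        fun ω => rpsProb_sum _ _ _ (c.sum_eq_one n ω)
      rw [integral_congr_ae (ae_of_all _ e4)]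
      simp
    have hUeq : μ (⋃ i, A n i) = 1 := by
      have h2 : μ (⋃ i, A n i) = ∑' i, μ (A n i) := measure_iUnion (hdisj n) (hAmeas n)
      rw [tsum_fintype] at h2
      have h3 : (μ (⋃ i, A n i)).toReal = ∑ i : Fin 6, (μ (A n i)).toReal := by
        rw [h2, ENNReal.toReal_sum]
        intro i _; exact measure_ne_top μ _
      have h4 := ENNReal.ofReal_toReal (measure_ne_top μ (⋃ i, A n i))
      rw [← h4, h3, hsum1]; simp
    rw [ae_iff]
    have : {ω | ¬ ω ∈ ⋃ i, A n i} = (⋃ i, A n i)ᶜ := rfl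
    rw [this, measure_compl hmeasU (measure_ne_top μ _), hUeq, measure_univ]
    simp
  
  -- pathwise: one-step update in multiplied form
  have hup : ∀ ω n, ω ∈ (⋃ i, A n i) → ∃ i : Fin 6,
      rpsGamma γ₀ (n+1) * c.X (n+1) ω = rpsGamma γ₀ n * c.X n ω + (rpsIncr i).1 ∧
      rpsGamma γ₀ (n+1) * c.Y (n+1) ω = rpsGamma γ₀ n * c.Y n ω + (rpsIncr i).2.1 ∧
      rpsGamma γ₀ (n+1) * c.Z (n+1) ω = rpsGamma γ₀ n * c.Z n ω + (rpsIncr i).2.2 := by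
    intro ω n hmem
    obtain ⟨i, hi⟩ := Set.mem_iUnion.mp hmem
    have hne' := (hγpos (n+1)).ne'
    refine ⟨i, ?_, ?_, ?_⟩
    · rw [hi.1]; field_simp
    · rw [hi.2.1]; field_simp
    · rw [hi.2.2]; field_simp
  have hmonoU : ∀ ω, (∀ n, ω ∈ ⋃ i, A n i) → ∀ n,
      rpsGamma γ₀ n * c.X n ω ≤ rpsGamma γ₀ (n+1) * c.X (n+1) ω
      ∧ rpsGamma γ₀ n * c.Y n ω ≤ rpsGamma γ₀ (n+1) * c.Y (n+1) ω
      ∧ rpsGamma γ₀ n * c.Z n ω ≤ rpsGamma γ₀ (n+1) * c.Z (n+1) ω := by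
    intro ω hω n
    obtain ⟨i, h1, h2, h3⟩ := hup ω n (hω n)
    obtain ⟨a1, a2, a3⟩ := rpsIncr_nonneg i
    exact ⟨by rw [h1]; linarith, by rw [h2]; linarith, by rw [h3]; linarith⟩
  have hlb : ∀ ω, (∀ n, ω ∈ ⋃ i, A n i) → ∀ n,
      cc ≤ rpsGamma γ₀ n * c.X n ω ∧ cc ≤ rpsGamma γ₀ n * c.Y n ω
      ∧ cc ≤ rpsGamma γ₀ n * c.Z n ω := by
    intro ω hω n
    induction n with
    | zero =>
      have e0 : rpsGamma γ₀ 0 = γ₀ := by simp [rpsGamma]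
      rw [e0]
      have hXc := c.init_X_const ω₀ ω
      have hYc := c.init_Y_const ω₀ ω
      have hZc := c.init_Z_const ω₀ ω
      have hγ0pos : (0:ℝ) < γ₀ := by linarith
      have hmr : cc ≤ γ₀ * min (c.X 0 ω₀) (min (c.Y 0 ω₀) (c.Z 0 ω₀)) := min_le_right _ _
      have m1 : min (c.X 0 ω₀) (min (c.Y 0 ω₀) (c.Z 0 ω₀)) ≤ c.X 0 ω₀ := min_le_left _ _
      have m2 : min (c.X 0 ω₀) (min (c.Y 0 ω₀) (c.Z 0 ω₀)) ≤ c.Y 0 ω₀ :=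
        le_trans (min_le_right _ _) (min_le_left _ _)
      have m3 : min (c.X 0 ω₀) (min (c.Y 0 ω₀) (c.Z 0 ω₀)) ≤ c.Z 0 ω₀ :=
        le_trans (min_le_right _ _) (min_le_right _ _)
      refine ⟨?_, ?_, ?_⟩
      · rw [← hXc]; nlinarith
      · rw [← hYc]; nlinarith
      · rw [← hZc]; nlinarith
    | succ n ih =>
      obtain ⟨m1, m2, m3⟩ := hmonoU ω hω n
      exact ⟨le_trans ih.1 m1, le_trans ih.2.1 m2, le_trans ih.2.2 m3⟩
  -- measurability of Gf
  have hGm : Measurable (Gf κ) := by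
    unfold Gf
    exact measurable_const.mul (measurable_const.sub (measurable_const.div
      (Real.continuous_sqrt.measurable.comp (measurable_const.add measurable_id))))
  -- the Lyapunov process
  have hVadp : Adapted c.F (rpsV γ₀ κ c.X c.Y c.Z) := by
    intro n
    have hx := (c.adapted_X n)
    have hy := (c.adapted_Y n)
    have hz := (c.adapted_Z n)
    have : Measurable[c.F n] fun ω =>
        - Real.log (c.X n ω * c.Y n ω * c.Z n ω)
        - (Gf κ (rpsGamma γ₀ n * c.X n ω) + Gf κ (rpsGamma γ₀ n * c.Y n ω)
           + Gf κ (rpsGamma γ₀ n * c.Z n ω)) := by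
      apply Measurable.sub
      · exact (Real.measurable_log.comp ((hx.mul hy).mul hz)).neg
      · exact ((hGm.comp (measurable_const.mul hx)).add
          (hGm.comp (measurable_const.mul hy))).add (hGm.comp (measurable_const.mul hz))
    exact this
  have hVlbω : ∀ ω, (∀ n, ω ∈ ⋃ i, A n i) → ∀ n,
      Real.log (c.X n ω * c.Y n ω * c.Z n ω) ≤ 0
      ∧ 3 * (Real.log cc - Real.log (rpsGamma γ₀ n)) ≤ Real.log (c.X n ω * c.Y n ω * c.Z n ω)
      ∧ 0 < c.X n ω ∧ 0 < c.Y n ω ∧ 0 < c.Z n ω := by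
    intro ω hω n
    obtain ⟨l1, l2, l3⟩ := hlb ω hω n
    have hγn := hγpos n
    have px : 0 < c.X n ω := by nlinarith
    have py : 0 < c.Y n ω := by nlinarith
    have pz : 0 < c.Z n ω := by nlinarith
    have hM1 : c.X n ω * c.Y n ω * c.Z n ω ≤ 1 := by
      have hxy : c.X n ω * c.Y n ω ≤ 1 := by
        nlinarith [hX01 n ω, hY01 n ω, mul_nonneg px.le (sub_nonneg.mpr (hY01 n ω))]
      nlinarith [hZ01 n ω, mul_nonneg (mul_nonneg px.le py.le) (sub_nonneg.mpr (hZ01 n ω))]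
    have hq : 0 < cc / rpsGamma γ₀ n := by positivity
    have b1 : cc / rpsGamma γ₀ n ≤ c.X n ω := (div_le_iff₀ hγn).mpr (by nlinarith)
    have b2 : cc / rpsGamma γ₀ n ≤ c.Y n ω := (div_le_iff₀ hγn).mpr (by nlinarith)
    have b3 : cc / rpsGamma γ₀ n ≤ c.Z n ω := (div_le_iff₀ hγn).mpr (by nlinarith)
    have hMlb : (cc / rpsGamma γ₀ n) ^ 3 ≤ c.X n ω * c.Y n ω * c.Z n ω := by
      calc (cc / rpsGamma γ₀ n) ^ 3
          = cc / rpsGamma γ₀ n * (cc / rpsGamma γ₀ n) * (cc / rpsGamma γ₀ n) := by ring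
        _ ≤ c.X n ω * c.Y n ω * c.Z n ω :=
            mul_le_mul (mul_le_mul b1 b2 hq.le px.le) b3 hq.le
              (mul_nonneg px.le py.le)
    refine ⟨Real.log_nonpos (by positivity) hM1, ?_, px, py, pz⟩
    have e1 : Real.log ((cc / rpsGamma γ₀ n) ^ 3) = 3 * (Real.log cc - Real.log (rpsGamma γ₀ n)) := by
      rw [Real.log_pow, Real.log_div (ne_of_gt hcc0) (ne_of_gt hγn)]
      push_cast; ring
    rw [← e1]
    exact Real.log_le_log (by positivity) hMlb
  have hVbound : ∀ n, ∀ᵐ ω ∂μ, ‖rpsV γ₀ κ c.X c.Y c.Z n ω‖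
      ≤ 3 * (Real.log (rpsGamma γ₀ n) - Real.log cc) + 3 * κ := by
    intro n
    filter_upwards [hQ] with ω hω
    obtain ⟨u1, u2, px, py, pz⟩ := hVlbω ω hω n
    have hγn := hγpos n
    have hGb : ∀ w : ℝ, 0 ≤ w → 0 ≤ Gf κ (rpsGamma γ₀ n * w) ∧ Gf κ (rpsGamma γ₀ n * w) ≤ κ :=
      fun w hw => ⟨Gf_nonneg hκ0 (by positivity), Gf_le hκ0 (by positivity)⟩
    obtain ⟨g1, g1'⟩ := hGb _ (c.nonneg_X n ω)
    obtain ⟨g2, g2'⟩ := hGb _ (c.nonneg_Y n ω)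
    obtain ⟨g3, g3'⟩ := hGb _ (c.nonneg_Z n ω)
    have hlogγ : 0 ≤ Real.log (rpsGamma γ₀ n) := Real.log_nonneg (by linarith [hγ2 n])
    have hlogcc : Real.log cc ≤ 0 := Real.log_nonpos hcc0.le hcc1
    rw [Real.norm_eq_abs, abs_le]
    simp only [rpsV]
    constructor <;> linarith
  have hVint : ∀ n, Integrable (rpsV γ₀ κ c.X c.Y c.Z n) μ := by
    intro n
    exact Integrable.mono' (integrable_const _)
      ((hVadp n).mono (c.F.le n) le_rfl).aestronglyMeasurable (hVbound n)
  
  -- case-value functions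
  set Fc : ℕ → Fin 6 → Ω → ℝ := fun n i ω =>
    rpsF (rpsGamma γ₀ n) κ (rpsIncr i) (c.X n ω) (c.Y n ω) (c.Z n ω) with hFcdef
  have hFcm : ∀ n i, Measurable[c.F n] (Fc n i) := by
    intro n i
    have hx := (c.adapted_X n)
    have hy := (c.adapted_Y n)
    have hz := (c.adapted_Z n)
    simp only [hFcdef, rpsF]
    refine Measurable.sub (Measurable.sub measurable_const ?_) ?_
    · exact ((Real.measurable_log.comp ((measurable_const.mul hx).add_const _)).add
        (Real.measurable_log.comp ((measurable_const.mul hy).add_const _))).add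
        (Real.measurable_log.comp ((measurable_const.mul hz).add_const _))
    · exact ((hGm.comp ((measurable_const.mul hx).add_const _)).add
        (hGm.comp ((measurable_const.mul hy).add_const _))).add
        (hGm.comp ((measurable_const.mul hz).add_const _))
  have hFcb : ∀ n i, ∀ᵐ ω ∂μ, ‖Fc n i ω‖ ≤
      3 * Real.log (rpsGamma γ₀ n + 4)
      + 3 * (Real.log (rpsGamma γ₀ n + 4) - Real.log cc) + 3 * κ := by
    intro n i
    filter_upwards [hQ] with ω hω
    obtain ⟨l1, l2, l3⟩ := hlb ω hω n
    obtain ⟨a1, a2, a3⟩ := rpsIncr_nonneg i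
    obtain ⟨b1, b2, b3⟩ := rpsIncr_le i
    have hγn := hγpos n
    have hd1 : (1:ℝ) ≤ rpsGamma γ₀ n + 4 := by linarith [hγ2 n]
    have hXle : rpsGamma γ₀ n * c.X n ω ≤ rpsGamma γ₀ n := by
      nlinarith [hX01 n ω, c.nonneg_X n ω]
    have hYle : rpsGamma γ₀ n * c.Y n ω ≤ rpsGamma γ₀ n := by
      nlinarith [hY01 n ω, c.nonneg_Y n ω]
    have hZle : rpsGamma γ₀ n * c.Z n ω ≤ rpsGamma γ₀ n := by
      nlinarith [hZ01 n ω, c.nonneg_Z n ω]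
    have hb1 := abs_log_bound hcc0 hcc1 (show cc ≤ rpsGamma γ₀ n * c.X n ω + (rpsIncr i).1 by linarith)
      (show rpsGamma γ₀ n * c.X n ω + (rpsIncr i).1 ≤ rpsGamma γ₀ n + 4 by linarith) hd1
    have hb2 := abs_log_bound hcc0 hcc1 (show cc ≤ rpsGamma γ₀ n * c.Y n ω + (rpsIncr i).2.1 by linarith)
      (show rpsGamma γ₀ n * c.Y n ω + (rpsIncr i).2.1 ≤ rpsGamma γ₀ n + 4 by linarith) hd1
    have hb3 := abs_log_bound hcc0 hcc1 (show cc ≤ rpsGamma γ₀ n * c.Z n ω + (rpsIncr i).2.2 by linarith)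
      (show rpsGamma γ₀ n * c.Z n ω + (rpsIncr i).2.2 ≤ rpsGamma γ₀ n + 4 by linarith) hd1
    have hg1 : 0 ≤ Gf κ (rpsGamma γ₀ n * c.X n ω + (rpsIncr i).1) :=
      Gf_nonneg hκ0 (by linarith)
    have hg1' : Gf κ (rpsGamma γ₀ n * c.X n ω + (rpsIncr i).1) ≤ κ :=
      Gf_le hκ0 (by linarith)
    have hg2 : 0 ≤ Gf κ (rpsGamma γ₀ n * c.Y n ω + (rpsIncr i).2.1) :=
      Gf_nonneg hκ0 (by linarith)
    have hg2' : Gf κ (rpsGamma γ₀ n * c.Y n ω + (rpsIncr i).2.1) ≤ κ :=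
      Gf_le hκ0 (by linarith)
    have hg3 : 0 ≤ Gf κ (rpsGamma γ₀ n * c.Z n ω + (rpsIncr i).2.2) :=
      Gf_nonneg hκ0 (by linarith)
    have hg3' : Gf κ (rpsGamma γ₀ n * c.Z n ω + (rpsIncr i).2.2) ≤ κ :=
      Gf_le hκ0 (by linarith)
    have hL' : 0 ≤ Real.log (rpsGamma γ₀ n + 4) := Real.log_nonneg hd1
    have hLc : Real.log cc ≤ 0 := Real.log_nonpos hcc0.le hcc1
    rw [Real.norm_eq_abs]
    simp only [hFcdef, rpsF]
    rw [abs_le] at hb1 hb2 hb3 ⊢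
    obtain ⟨c1, c1'⟩ := hb1; obtain ⟨c2, c2'⟩ := hb2; obtain ⟨c3, c3'⟩ := hb3
    constructor <;> linarith
  have hIntInd : ∀ n i, Integrable ((A n i).indicator (fun _ => (1:ℝ))) μ :=
    fun n i => (integrable_const (1:ℝ)).indicator (hAmeas n i)
  have hIndm : ∀ n i, Measurable ((A n i).indicator (fun _ => (1:ℝ))) :=
    fun n i => measurable_const.indicator (hAmeas n i)
  have hIntFcInd : ∀ n i,
      Integrable (fun ω => Fc n i ω * (A n i).indicator (fun _ => (1:ℝ)) ω) μ := by
    intro n i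
    refine Integrable.mono' (integrable_const
      (3 * Real.log (rpsGamma γ₀ n + 4)
        + 3 * (Real.log (rpsGamma γ₀ n + 4) - Real.log cc) + 3 * κ))
      ((((hFcm n i).mono (c.F.le n) le_rfl).mul (hIndm n i)).aestronglyMeasurable) ?_
    filter_upwards [hFcb n i] with ω hb
    rw [Real.norm_eq_abs, abs_mul]
    have hind : |(A n i).indicator (fun _ => (1:ℝ)) ω| ≤ 1 := by
      by_cases h : ω ∈ A n i
      · rw [Set.indicator_of_mem h]; norm_num
      · rw [Set.indicator_of_notMem h]; norm_num
    rw [Real.norm_eq_abs] at hb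
    have := abs_nonneg (Fc n i ω)
    nlinarith [hb, hind]
  -- a.e. identity for V (n+1)
  have heq : ∀ n, rpsV γ₀ κ c.X c.Y c.Z (n+1) =ᵐ[μ]
      fun ω => ∑ i : Fin 6, Fc n i ω * (A n i).indicator (fun _ => (1:ℝ)) ω := by
    intro n
    filter_upwards [hQ] with ω hω
    obtain ⟨i, hi⟩ := Set.mem_iUnion.mp (hω n)
    obtain ⟨l1, l2, l3⟩ := hlb ω hω n
    obtain ⟨a1, a2, a3⟩ := rpsIncr_nonneg i
    have hγn := hγpos n
    have hγn' := hγpos (n+1)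
    have hsum_eq : ∑ j : Fin 6, Fc n j ω * (A n j).indicator (fun _ => (1:ℝ)) ω
        = Fc n i ω := by
      rw [Finset.sum_eq_single_of_mem i (Finset.mem_univ i)]
      · rw [Set.indicator_of_mem hi, mul_one]
      · intro j _ hji
        have hnot : ω ∉ A n j := fun hj =>
          absurd hi (Set.disjoint_left.mp (hdisj n hji) hj)
        rw [Set.indicator_of_notMem hnot, mul_zero]
    show rpsV γ₀ κ c.X c.Y c.Z (n+1) ω
        = ∑ j : Fin 6, Fc n j ω * (A n j).indicator (fun _ => (1:ℝ)) ω
    rw [hsum_eq]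
    have e1 : c.X (n+1) ω = (rpsGamma γ₀ n * c.X n ω + (rpsIncr i).1) / rpsGamma γ₀ (n+1) := hi.1
    have e2 : c.Y (n+1) ω = (rpsGamma γ₀ n * c.Y n ω + (rpsIncr i).2.1) / rpsGamma γ₀ (n+1) := hi.2.1
    have e3 : c.Z (n+1) ω = (rpsGamma γ₀ n * c.Z n ω + (rpsIncr i).2.2) / rpsGamma γ₀ (n+1) := hi.2.2
    have pXa : 0 < rpsGamma γ₀ n * c.X n ω + (rpsIncr i).1 := by linarith
    have pYa : 0 < rpsGamma γ₀ n * c.Y n ω + (rpsIncr i).2.1 := by linarith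
    have pZa : 0 < rpsGamma γ₀ n * c.Z n ω + (rpsIncr i).2.2 := by linarith
    have pX' : 0 < c.X (n+1) ω := by rw [e1]; positivity
    have pY' : 0 < c.Y (n+1) ω := by rw [e2]; positivity
    have pZ' : 0 < c.Z (n+1) ω := by rw [e3]; positivity
    have g1 : rpsGamma γ₀ (n+1) * c.X (n+1) ω
        = rpsGamma γ₀ n * c.X n ω + (rpsIncr i).1 := by
      rw [e1]; field_simp
    have g2 : rpsGamma γ₀ (n+1) * c.Y (n+1) ω
        = rpsGamma γ₀ n * c.Y n ω + (rpsIncr i).2.1 := by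
      rw [e2]; field_simp
    have g3 : rpsGamma γ₀ (n+1) * c.Z (n+1) ω
        = rpsGamma γ₀ n * c.Z n ω + (rpsIncr i).2.2 := by
      rw [e3]; field_simp
    have hlogprod : Real.log (c.X (n+1) ω * c.Y (n+1) ω * c.Z (n+1) ω)
        = Real.log (rpsGamma γ₀ n * c.X n ω + (rpsIncr i).1)
          + Real.log (rpsGamma γ₀ n * c.Y n ω + (rpsIncr i).2.1)
          + Real.log (rpsGamma γ₀ n * c.Z n ω + (rpsIncr i).2.2)
          - 3 * Real.log (rpsGamma γ₀ (n+1)) := by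
      rw [Real.log_mul (by positivity) (ne_of_gt pZ'), Real.log_mul (ne_of_gt pX') (ne_of_gt pY'),
        e1, e2, e3, Real.log_div (ne_of_gt pXa) (ne_of_gt hγn'),
        Real.log_div (ne_of_gt pYa) (ne_of_gt hγn'), Real.log_div (ne_of_gt pZa) (ne_of_gt hγn')]
      ring
    simp only [rpsV, hFcdef, rpsF]
    rw [hlogprod, g1, g2, g3, ← hγmono n]
    ring
  
  -- conditional expectation inequality
  have hce : ∀ n, μ[rpsV γ₀ κ c.X c.Y c.Z (n+1)|c.F n] ≤ᵐ[μ] rpsV γ₀ κ c.X c.Y c.Z n := by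
    intro n
    have h1 : μ[rpsV γ₀ κ c.X c.Y c.Z (n+1)|c.F n]
        =ᵐ[μ] μ[(fun ω => ∑ i : Fin 6, Fc n i ω * (A n i).indicator (fun _ => (1:ℝ)) ω)|c.F n] :=
      condExp_congr_ae (heq n)
    have e0 : (fun ω => ∑ i : Fin 6, Fc n i ω * (A n i).indicator (fun _ => (1:ℝ)) ω)
        = ∑ i : Fin 6, (fun ω => Fc n i ω * (A n i).indicator (fun _ => (1:ℝ)) ω) := by
      funext ω; rw [Finset.sum_apply]
    have h2 : μ[(fun ω => ∑ i : Fin 6, Fc n i ω * (A n i).indicator (fun _ => (1:ℝ)) ω)|c.F n]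
        =ᵐ[μ] ∑ i : Fin 6, μ[(fun ω => Fc n i ω * (A n i).indicator (fun _ => (1:ℝ)) ω)|c.F n] := by
      rw [e0]
      exact condExp_finsetSum (fun i _ => hIntFcInd n i) (c.F n)
    have h3 : ∀ i : Fin 6,
        μ[(fun ω => Fc n i ω * (A n i).indicator (fun _ => (1:ℝ)) ω)|c.F n]
        =ᵐ[μ] fun ω => Fc n i ω * rpsProb i (c.X n ω) (c.Y n ω) (c.Z n ω) := by
      intro i
      have hmul := condExp_mul_of_stronglyMeasurable_left ((hFcm n i).stronglyMeasurable)
        (hIntFcInd n i) (hIntInd n i)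
      refine hmul.trans ?_
      filter_upwards [hstep n i] with ω hω
      simp only [Pi.mul_apply]
      rw [hω]
    have h4 : ∀ᵐ ω ∂μ, ∀ i : Fin 6,
        (μ[(fun ω => Fc n i ω * (A n i).indicator (fun _ => (1:ℝ)) ω)|c.F n]) ω
        = Fc n i ω * rpsProb i (c.X n ω) (c.Y n ω) (c.Z n ω) :=
      ae_all_iff.mpr fun i => h3 i
    filter_upwards [h1, h2, h4, hQ] with ω e1 e2 e4 hω
    obtain ⟨l1, l2, l3⟩ := hlb ω hω n
    have hγn := hγpos n
    have px : 0 < c.X n ω := by nlinarith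
    have py : 0 < c.Y n ω := by nlinarith
    have pz : 0 < c.Z n ω := by nlinarith
    have hkey := rps_key (γ := rpsGamma γ₀ n) (cc := cc) (κ := κ)
      (x := c.X n ω) (y := c.Y n ω) (z := c.Z n ω)
      (hγ2 n) hcc0 hcc1 hκdef (c.sum_eq_one n ω) l1 l2 l3
    have hVid : rpsV γ₀ κ c.X c.Y c.Z n ω
        = 3 * Real.log (rpsGamma γ₀ n)
          - (Real.log (rpsGamma γ₀ n * c.X n ω) + Real.log (rpsGamma γ₀ n * c.Y n ω)
             + Real.log (rpsGamma γ₀ n * c.Z n ω))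
          - (Gf κ (rpsGamma γ₀ n * c.X n ω) + Gf κ (rpsGamma γ₀ n * c.Y n ω)
             + Gf κ (rpsGamma γ₀ n * c.Z n ω)) := by
      simp only [rpsV]
      rw [Real.log_mul (by positivity) (ne_of_gt pz), Real.log_mul (ne_of_gt px) (ne_of_gt py),
        Real.log_mul (ne_of_gt hγn) (ne_of_gt px), Real.log_mul (ne_of_gt hγn) (ne_of_gt py),
        Real.log_mul (ne_of_gt hγn) (ne_of_gt pz)]
      ring
    calc (μ[rpsV γ₀ κ c.X c.Y c.Z (n+1)|c.F n]) ω
        = (∑ i : Fin 6, μ[(fun ω => Fc n i ω * (A n i).indicator (fun _ => (1:ℝ)) ω)|c.F n]) ω := by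
          rw [e1, e2]
      _ = ∑ i : Fin 6, Fc n i ω * rpsProb i (c.X n ω) (c.Y n ω) (c.Z n ω) := by
          rw [Finset.sum_apply]
          exact Finset.sum_congr rfl fun i _ => e4 i
      _ = ∑ i : Fin 6, rpsProb i (c.X n ω) (c.Y n ω) (c.Z n ω)
            * rpsF (rpsGamma γ₀ n) κ (rpsIncr i) (c.X n ω) (c.Y n ω) (c.Z n ω) := by
          refine Finset.sum_congr rfl fun i _ => ?_
          simp only [hFcdef]
          ring
      _ ≤ rpsV γ₀ κ c.X c.Y c.Z n ω := by rw [hVid]; exact hkey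
  
  -- supermartingale
  have hsm : Supermartingale (rpsV γ₀ κ c.X c.Y c.Z) c.F μ :=
    supermartingale_nat hVadp.stronglyAdapted hVint hce
  -- pointwise lower bound for V
  have hVlb : ∀ n ω, -(3 * κ) ≤ rpsV γ₀ κ c.X c.Y c.Z n ω := by
    intro n ω
    have hγn := hγpos n
    have hM1 : c.X n ω * c.Y n ω * c.Z n ω ≤ 1 := by
      have hx0 := c.nonneg_X n ω; have hy0 := c.nonneg_Y n ω; have hz0 := c.nonneg_Z n ω
      have hxy : c.X n ω * c.Y n ω ≤ 1 := by
        nlinarith [hX01 n ω, hY01 n ω, mul_nonneg hx0 (sub_nonneg.mpr (hY01 n ω))]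
      nlinarith [hZ01 n ω, mul_nonneg (mul_nonneg hx0 hy0) (sub_nonneg.mpr (hZ01 n ω))]
    have hM0 : 0 ≤ c.X n ω * c.Y n ω * c.Z n ω := by
      have := c.nonneg_X n ω; have := c.nonneg_Y n ω; have := c.nonneg_Z n ω
      positivity
    have hlog0 : Real.log (c.X n ω * c.Y n ω * c.Z n ω) ≤ 0 := Real.log_nonpos hM0 hM1
    have g1 : Gf κ (rpsGamma γ₀ n * c.X n ω) ≤ κ :=
      Gf_le hκ0 (mul_nonneg hγn.le (c.nonneg_X n ω))
    have g2 : Gf κ (rpsGamma γ₀ n * c.Y n ω) ≤ κ :=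
      Gf_le hκ0 (mul_nonneg hγn.le (c.nonneg_Y n ω))
    have g3 : Gf κ (rpsGamma γ₀ n * c.Z n ω) ≤ κ :=
      Gf_le hκ0 (mul_nonneg hγn.le (c.nonneg_Z n ω))
    simp only [rpsV]
    linarith
  -- uniform L¹ bound
  have hEmono : ∀ n, ∫ ω, rpsV γ₀ κ c.X c.Y c.Z n ω ∂μ ≤ ∫ ω, rpsV γ₀ κ c.X c.Y c.Z 0 ω ∂μ := by
    intro n
    have := hsm.setIntegral_le (Nat.zero_le n) (MeasurableSet.univ)
    rwa [setIntegral_univ, setIntegral_univ] at this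
  set R := ENNReal.ofReal (∫ ω, rpsV γ₀ κ c.X c.Y c.Z 0 ω ∂μ + 6 * κ) with hRdef
  have hbdd : ∀ n, eLpNorm (rpsV γ₀ κ c.X c.Y c.Z n) 1 μ ≤ R := by
    intro n
    have habs : ∫ ω, ‖rpsV γ₀ κ c.X c.Y c.Z n ω‖ ∂μ
        ≤ ∫ ω, rpsV γ₀ κ c.X c.Y c.Z 0 ω ∂μ + 6 * κ := by
      have h1 : ∫ ω, ‖rpsV γ₀ κ c.X c.Y c.Z n ω‖ ∂μ
          ≤ ∫ ω, (rpsV γ₀ κ c.X c.Y c.Z n ω + 6 * κ) ∂μ := by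
        refine integral_mono_ae (hVint n).norm ((hVint n).add (integrable_const _))
          (ae_of_all _ fun ω => ?_)
        simp only [Real.norm_eq_abs]
        rw [abs_le]
        constructor <;> linarith [hVlb n ω]
      have h2 : ∫ ω, (rpsV γ₀ κ c.X c.Y c.Z n ω + 6 * κ) ∂μ
          = ∫ ω, rpsV γ₀ κ c.X c.Y c.Z n ω ∂μ + 6 * κ := by
        rw [integral_add (hVint n) (integrable_const _), integral_const]
        simp [measure_univ]
      linarith [hEmono n, h1, h2.le, h2.ge]
    have h3 : eLpNorm (rpsV γ₀ κ c.X c.Y c.Z n) 1 μ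
        = ENNReal.ofReal (∫ ω, ‖rpsV γ₀ κ c.X c.Y c.Z n ω‖ ∂μ) := by
      rw [eLpNorm_one_eq_lintegral_enorm,
        ← ofReal_integral_norm_eq_lintegral_enorm (hVint n)]
    rw [h3, hRdef]
    exact ENNReal.ofReal_le_ofReal habs
  -- a.e. convergence of V
  have hconv : ∀ᵐ ω ∂μ, ∃ L, Tendsto (fun n => rpsV γ₀ κ c.X c.Y c.Z n ω) atTop (𝓝 L) := by
    have hneg : Submartingale (- rpsV γ₀ κ c.X c.Y c.Z) c.F μ := hsm.neg
    have hbdd' : ∀ n, eLpNorm ((- rpsV γ₀ κ c.X c.Y c.Z) n) 1 μ ≤ R := by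
      intro n
      have : (- rpsV γ₀ κ c.X c.Y c.Z) n = - (rpsV γ₀ κ c.X c.Y c.Z n) := rfl
      rw [this, eLpNorm_neg]
      exact hbdd n
    filter_upwards [hneg.exists_ae_tendsto_of_bdd hbdd'] with ω ⟨L, hL⟩
    refine ⟨-L, ?_⟩
    have := hL.neg
    simp only [Pi.neg_apply, neg_neg] at this ⊢
    exact this
  
  -- conclusion
  filter_upwards [hconv, hQ] with ω hcω hω
  obtain ⟨L, hL⟩ := hcω
  have humX : Monotone fun n => rpsGamma γ₀ n * c.X n ω :=
    monotone_nat_of_le_succ fun n => (hmonoU ω hω n).1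
  have humY : Monotone fun n => rpsGamma γ₀ n * c.Y n ω :=
    monotone_nat_of_le_succ fun n => (hmonoU ω hω n).2.1
  have humZ : Monotone fun n => rpsGamma γ₀ n * c.Z n ω :=
    monotone_nat_of_le_succ fun n => (hmonoU ω hω n).2.2
  have hGmX : Monotone fun n => Gf κ (rpsGamma γ₀ n * c.X n ω) := fun m n hmn =>
    Gf_mono hκ0 (mul_nonneg (hγpos m).le (c.nonneg_X m ω)) (humX hmn)
  have hGmY : Monotone fun n => Gf κ (rpsGamma γ₀ n * c.Y n ω) := fun m n hmn =>
    Gf_mono hκ0 (mul_nonneg (hγpos m).le (c.nonneg_Y m ω)) (humY hmn)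
  have hGmZ : Monotone fun n => Gf κ (rpsGamma γ₀ n * c.Z n ω) := fun m n hmn =>
    Gf_mono hκ0 (mul_nonneg (hγpos m).le (c.nonneg_Z m ω)) (humZ hmn)
  have hbX : BddAbove (Set.range fun n => Gf κ (rpsGamma γ₀ n * c.X n ω)) := by
    refine ⟨κ, ?_⟩; rintro _ ⟨n, rfl⟩
    exact Gf_le hκ0 (mul_nonneg (hγpos n).le (c.nonneg_X n ω))
  have hbY : BddAbove (Set.range fun n => Gf κ (rpsGamma γ₀ n * c.Y n ω)) := by
    refine ⟨κ, ?_⟩; rintro _ ⟨n, rfl⟩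
    exact Gf_le hκ0 (mul_nonneg (hγpos n).le (c.nonneg_Y n ω))
  have hbZ : BddAbove (Set.range fun n => Gf κ (rpsGamma γ₀ n * c.Z n ω)) := by
    refine ⟨κ, ?_⟩; rintro _ ⟨n, rfl⟩
    exact Gf_le hκ0 (mul_nonneg (hγpos n).le (c.nonneg_Z n ω))
  have hGX := tendsto_atTop_ciSup hGmX hbX
  have hGY := tendsto_atTop_ciSup hGmY hbY
  have hGZ := tendsto_atTop_ciSup hGmZ hbZ
  have hlogid : ∀ n, Real.log (c.X n ω * c.Y n ω * c.Z n ω)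
      = - rpsV γ₀ κ c.X c.Y c.Z n ω
        - (Gf κ (rpsGamma γ₀ n * c.X n ω) + Gf κ (rpsGamma γ₀ n * c.Y n ω)
           + Gf κ (rpsGamma γ₀ n * c.Z n ω)) := by
    intro n; simp only [rpsV]; ring
  have hlogt : Tendsto (fun n => Real.log (c.X n ω * c.Y n ω * c.Z n ω)) atTop
      (𝓝 (- L - ((⨆ n, Gf κ (rpsGamma γ₀ n * c.X n ω))
        + (⨆ n, Gf κ (rpsGamma γ₀ n * c.Y n ω))
        + (⨆ n, Gf κ (rpsGamma γ₀ n * c.Z n ω))))) := by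
    have h1 := (hL.neg).sub ((hGX.add hGY).add hGZ)
    exact Tendsto.congr (fun n => (hlogid n).symm) h1
  have hMpos : ∀ n, 0 < c.X n ω * c.Y n ω * c.Z n ω := by
    intro n
    obtain ⟨l1, l2, l3⟩ := hlb ω hω n
    have hγn := hγpos n
    have px : 0 < c.X n ω := by nlinarith
    have py : 0 < c.Y n ω := by nlinarith
    have pz : 0 < c.Z n ω := by nlinarith
    positivity
  have hMt : Tendsto (fun n => c.X n ω * c.Y n ω * c.Z n ω) atTop
      (𝓝 (Real.exp (- L - ((⨆ n, Gf κ (rpsGamma γ₀ n * c.X n ω))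
        + (⨆ n, Gf κ (rpsGamma γ₀ n * c.Y n ω))
        + (⨆ n, Gf κ (rpsGamma γ₀ n * c.Z n ω)))))) := by
    have h1 := (Real.continuous_exp.tendsto _).comp hlogt
    refine Tendsto.congr (fun n => ?_) h1
    exact Real.exp_log (hMpos n)
  constructor
  · rw [hMt.liminf_eq]
    exact Real.exp_pos _
  · intro M hM
    rw [tendsto_nhds_unique hM hMt]
    exact Real.exp_pos _
end
end

section
/- For every probability vector p on {1,…,n} and all m, k, one has q_{n,m,k}(p) ≤ q_{n,m,k}(u), where u = (1/n,…,1/n) is the uniform probability vector. Moreover, if n ≥ k, m ≥ k and k ≥ 2, then equality holds only when p = u; i.e. the uniform vector is the unique maximiser of q_{n,m,k}. -/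
open Finset

noncomputable section

/-- `q n m k p` is the probability that `m` i.i.d. samples from the probability vector `p`
on `{1,…,n}` take at least `k` different values: the sum over all functions
`s : Fin m → Fin n` whose image has at least `k` elements of `∏ j, p (s j)`. -/
def q (n m k : ℕ) (p : Fin n → ℝ) : ℝ :=
  ∑ s ∈ Finset.univ.filter (fun s : Fin m → Fin n => k ≤ (Finset.univ.image s).card),
    ∏ j, p (s j)



lemma convex_aux (a : ℕ) (c : ℝ) :
    ConvexOn ℝ (Set.Icc 0 c) (fun y : ℝ => y ^ a + (c - y) ^ a) := by
  apply ConvexOn.add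
  · exact (convexOn_pow a).subset (fun y hy => hy.1) (convex_Icc 0 c)
  · have := (convexOn_pow (𝕜 := ℝ) a).comp_affineMap
      (AffineMap.const ℝ ℝ c - AffineMap.id ℝ ℝ)
    refine this.subset (fun y hy => ?_) (convex_Icc 0 c)
    simp [Set.mem_preimage, AffineMap.coe_sub]
    exact hy.2

lemma L1 (a : ℕ) {c x x' : ℝ} (hx0 : 0 ≤ x) (hxc : x ≤ c)
    (hx' : x' ∈ Set.uIcc x (c - x)) :
    x' ^ a + (c - x') ^ a ≤ x ^ a + (c - x) ^ a := by
  have hcv := convex_aux a c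
  have hxI : x ∈ Set.Icc (0:ℝ) c := ⟨hx0, hxc⟩
  have hyI : c - x ∈ Set.Icc (0:ℝ) c := ⟨by linarith, by linarith⟩
  have := hcv.le_on_segment hxI hyI (by rw [segment_eq_uIcc]; exact hx')
  have heq : (c - x) ^ a + (c - (c - x)) ^ a = x ^ a + (c - x) ^ a := by ring_nf
  calc x' ^ a + (c - x') ^ a ≤ _ := this
    _ = x ^ a + (c - x) ^ a := by rw [heq]; simp [max_self]


lemma L1strict (a : ℕ) (ha : 2 ≤ a) {c x : ℝ} (hx0 : 0 ≤ x) (hxc : x ≤ c)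
    (hx : x ≠ c / 2) :
    (c/2) ^ a + (c - c/2) ^ a < x ^ a + (c - x) ^ a := by
  have hs := strictConvexOn_pow ha
  have hne : x ≠ c - x := by intro h; apply hx; linarith
  have := hs.2 (Set.mem_Ici.2 hx0) (Set.mem_Ici.2 (by linarith : (0:ℝ) ≤ c - x)) hne
    (by norm_num : (0:ℝ) < 1/2) (by norm_num : (0:ℝ) < 1/2) (by norm_num)
  have h2 : (1/2 : ℝ) • x + (1/2 : ℝ) • (c - x) = c/2 := by
    simp only [smul_eq_mul]; ring
  rw [h2] at this
  simp only [smul_eq_mul] at this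
  have hcc : c - c/2 = c/2 := by ring
  rw [hcc]
  linarith

variable {n m k : ℕ}


def upd (p : Fin n → ℝ) (i j : Fin n) (x : ℝ) : Fin n → ℝ :=
  fun l => if l = i then x else if l = j then p i + p j - x else p l

def coll (i j : Fin n) (s : Fin m → Fin n) : Fin m → Fin n :=
  fun r => if s r = j then i else s r

def fib (m k : ℕ) (i j : Fin n) (p : Fin n → ℝ) (x : ℝ) (t : Fin m → Fin n) : ℝ :=
  ∑ s ∈ Finset.univ.filter (fun s : Fin m → Fin n => coll i j s = t),
    if k ≤ (Finset.univ.image s).card then ∏ r, upd p i j x (s r) else 0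

lemma fib_good (i j : Fin n) (hij : i ≠ j) (p : Fin n → ℝ) (x : ℝ)
    (t : Fin m → Fin n) (hgood : ∀ r, t r ≠ j) :
    fib m k i j p x t =
      (fun (A : Finset (Fin m)) (B : Finset (Fin n)) (w c : ℝ) =>
        if A = ∅ then (if k ≤ B.card then w else 0)
        else if k ≤ B.card + 1 then c ^ A.card * w
        else if k = B.card + 2 then (c ^ A.card - x ^ A.card - (c - x) ^ A.card) * w
        else 0)
      (Finset.univ.filter (fun r => t r = i))
      ((Finset.univ \ (Finset.univ.filter (fun r => t r = i))).image t)
      (∏ r ∈ Finset.univ \ (Finset.univ.filter (fun r => t r = i)), p (t r))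
      (p i + p j) := by
  simp only []
  set A : Finset (Fin m) := Finset.univ.filter (fun r => t r = i) with hA
  set B : Finset (Fin n) := (Finset.univ \ A).image t with hB
  set w : ℝ := ∏ r ∈ Finset.univ \ A, p (t r) with hw
  set c : ℝ := p i + p j with hc
  have hji : j ≠ i := hij.symm
  have hmemA : ∀ r, r ∈ A ↔ t r = i := by intro r; simp [hA]
  have hiB : i ∉ B := by
    simp only [hB, Finset.mem_image]
    rintro ⟨r, hr, hri⟩
    rw [Finset.mem_sdiff, hmemA r] at hr
    exact hr.2 hri
  have hjB : j ∉ B := by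
    simp only [hB, Finset.mem_image]
    rintro ⟨r, _, hrj⟩
    exact hgood r hrj
  -- the parametrisation of the fiber
  set sD : Finset (Fin m) → (Fin m → Fin n) := fun D r => if r ∈ D then j else t r with hsD
  set Dof : (Fin m → Fin n) → Finset (Fin m) := fun s => Finset.univ.filter (fun r => s r = j)
    with hDof
  set F : Finset (Fin m) → ℝ := fun D =>
    if k ≤ B.card + (if D = A then 0 else 1) + (if D = ∅ then 0 else 1)
    then (c - x) ^ D.card * x ^ (A.card - D.card) * w else 0 with hF
  have h2' : ∀ D ∈ A.powerset, coll i j (sD D) = t := by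
    intro D hD
    rw [Finset.mem_powerset] at hD
    funext r
    by_cases hr : r ∈ D
    · have : sD D r = j := by simp [hsD, hr]
      rw [coll, this, if_pos rfl]
      exact ((hmemA r).1 (hD hr)).symm
    · have h1 : sD D r = t r := by simp [hsD, hr]
      rw [coll, h1, if_neg (hgood r)]
  have h2 : ∀ D ∈ A.powerset, sD D ∈ Finset.univ.filter (fun s : Fin m → Fin n => coll i j s = t) := by
    intro D hD
    rw [Finset.mem_filter]
    exact ⟨Finset.mem_univ _, h2' D hD⟩
  have h4 : ∀ D ∈ A.powerset, Dof (sD D) = D := by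
    intro D hD
    rw [Finset.mem_powerset] at hD
    ext r
    simp only [hDof, Finset.mem_filter, Finset.mem_univ, true_and, hsD]
    by_cases hr : r ∈ D
    · simp [hr]
    · simp [hr, hgood r]
  have h3 : ∀ s ∈ Finset.univ.filter (fun s : Fin m → Fin n => coll i j s = t),
      sD (Dof s) = s := by
    intro s hs
    rw [Finset.mem_filter] at hs
    funext r
    by_cases hr : s r = j
    · simp [hsD, hDof, hr]
    · have hrt : t r = s r := by rw [← hs.2]; simp [coll, hr]
      simp [hsD, hDof, hr, hrt]
  have h1 : ∀ s ∈ Finset.univ.filter (fun s : Fin m → Fin n => coll i j s = t),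
      Dof s ∈ A.powerset := by
    intro s hs
    rw [Finset.mem_filter] at hs
    rw [Finset.mem_powerset]
    intro r hr
    simp only [hDof, Finset.mem_filter, Finset.mem_univ, true_and] at hr
    rw [hmemA, ← hs.2]
    simp [coll, hr]
  -- key computation on the parametrised fiber
  have key : ∀ D ∈ A.powerset,
      (if k ≤ (Finset.univ.image (sD D)).card then ∏ r, upd p i j x (sD D r) else 0) = F D := by
    intro D hD
    rw [Finset.mem_powerset] at hD
    -- image computation
    have himg : Finset.univ.image (sD D) =
        (D.image fun _ => j) ∪ ((A \ D).image fun _ => i) ∪ B := by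
      have huniv : (Finset.univ : Finset (Fin m)) = D ∪ (A \ D) ∪ (Finset.univ \ A) := by
        rw [Finset.union_sdiff_of_subset hD, Finset.union_sdiff_of_subset (Finset.subset_univ A)]
      conv_lhs => rw [huniv]
      rw [Finset.image_union, Finset.image_union]
      congr 1
      · congr 1
        · apply Finset.image_congr; intro r hr
          rw [Finset.mem_coe] at hr; simp [hsD, hr]
        · apply Finset.image_congr; intro r hr
          rw [Finset.mem_coe, Finset.mem_sdiff] at hr
          simp [hsD, hr.2, (hmemA r).1 hr.1]
      · apply Finset.image_congr; intro r hr
        rw [Finset.mem_coe, Finset.mem_sdiff] at hr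
        have : r ∉ D := fun h => hr.2 (hD h)
        simp [hsD, this]
    have hcard : (Finset.univ.image (sD D)).card =
        B.card + (if D = A then 0 else 1) + (if D = ∅ then 0 else 1) := by
      rw [himg]
      have hXj : ∀ a ∈ D.image (fun _ : Fin m => j), a = j := by
        intro a ha; rw [Finset.mem_image] at ha; obtain ⟨r, _, h⟩ := ha; exact h.symm
      have hYi : ∀ a ∈ (A \ D).image (fun _ : Fin m => i), a = i := by
        intro a ha; rw [Finset.mem_image] at ha; obtain ⟨r, _, h⟩ := ha; exact h.symm
      have hdXY : Disjoint (D.image fun _ : Fin m => j) ((A \ D).image fun _ : Fin m => i) := by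
        rw [Finset.disjoint_left]
        intro a ha ha'
        exact hji ((hXj a ha).symm.trans (hYi a ha'))
      have hdB : Disjoint ((D.image fun _ : Fin m => j) ∪ ((A \ D).image fun _ : Fin m => i)) B := by
        rw [Finset.disjoint_left]
        intro a ha haB
        rcases Finset.mem_union.1 ha with h | h
        · exact hjB ((hXj a h) ▸ haB)
        · exact hiB ((hYi a h) ▸ haB)
      rw [Finset.card_union_of_disjoint hdB, Finset.card_union_of_disjoint hdXY]
      have hcX : (D.image fun _ : Fin m => j).card = if D = ∅ then 0 else 1 := by
        by_cases h : D = ∅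
        · simp [h]
        · obtain ⟨r, hr⟩ := Finset.nonempty_iff_ne_empty.2 h
          rw [if_neg h]
          have : D.image (fun _ : Fin m => j) = {j} :=
            Finset.image_const ⟨r, hr⟩ j
          rw [this, Finset.card_singleton]
      have hcY : ((A \ D).image fun _ : Fin m => i).card = if D = A then 0 else 1 := by
        by_cases h : D = A
        · simp [h]
        · have hne : (A \ D).Nonempty := by
            rw [Finset.sdiff_nonempty]
            intro hsub
            exact h (Finset.Subset.antisymm hD hsub)
          rw [if_neg h, Finset.image_const hne i, Finset.card_singleton]
      rw [hcX, hcY]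
      omega
    -- product computation
    have hprod : (∏ r, upd p i j x (sD D r)) =
        (c - x) ^ D.card * x ^ (A.card - D.card) * w := by
      rw [← Finset.prod_sdiff (Finset.subset_univ A), ← Finset.prod_sdiff hD]
      have e1 : ∀ r ∈ Finset.univ \ A, upd p i j x (sD D r) = p (t r) := by
        intro r hr
        rw [Finset.mem_sdiff, hmemA] at hr
        have hrD : r ∉ D := fun h => hr.2 ((hmemA r).1 (hD h))
        have : sD D r = t r := by simp [hsD, hrD]
        rw [this, upd, if_neg hr.2, if_neg (hgood r)]
      have e2 : ∀ r ∈ A \ D, upd p i j x (sD D r) = x := by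
        intro r hr
        rw [Finset.mem_sdiff] at hr
        have : sD D r = i := by simp [hsD, hr.2, (hmemA r).1 hr.1]
        rw [this, upd, if_pos rfl]
      have e3 : ∀ r ∈ D, upd p i j x (sD D r) = c - x := by
        intro r hr
        have : sD D r = j := by simp [hsD, hr]
        rw [this, upd, if_neg hji, if_pos rfl]
      rw [Finset.prod_congr rfl e1, Finset.prod_congr rfl e2, Finset.prod_congr rfl e3,
        Finset.prod_const, Finset.prod_const, Finset.card_sdiff_of_subset hD]
      ring
    rw [hcard, hprod, hF]
  have hsum : fib m k i j p x t = ∑ D ∈ A.powerset, F D := by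
    rw [fib]
    refine Finset.sum_nbij' Dof sD h1 h2 h3 h4 ?_
    intro s hs
    conv_lhs => rw [← h3 s hs]
    exact key (Dof s) (h1 s hs)
  rw [hsum]
  by_cases hAe : A = ∅
  · rw [if_pos hAe, hAe, Finset.powerset_empty, Finset.sum_singleton, hF]
    simp only [if_pos (hAe ▸ rfl : (∅ : Finset (Fin m)) = A), if_pos rfl]
    rw [hAe]
    simp
  · rw [if_neg hAe]
    have hbinom : ∑ D ∈ A.powerset, (c - x) ^ D.card * x ^ (A.card - D.card) = c ^ A.card := by
      have := Finset.prod_add (fun _ : Fin m => c - x) (fun _ : Fin m => x) A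
      simp only [Finset.prod_const] at this
      have hcx : c - x + x = c := by ring
      rw [hcx] at this
      rw [this]
      apply Finset.sum_congr rfl
      intro D hD
      rw [Finset.mem_powerset] at hD
      rw [Finset.card_sdiff_of_subset hD]
    by_cases hk1 : k ≤ B.card + 1
    · rw [if_pos hk1]
      have : ∀ D ∈ A.powerset, F D = (c - x) ^ D.card * x ^ (A.card - D.card) * w := by
        intro D hD
        rw [hF]
        simp only []
        rw [if_pos]
        by_cases h0 : D = ∅
        · have hDA : ¬ (D = A) := fun h => hAe (h ▸ h0 ▸ h0)
          simp only [if_neg hDA, if_pos h0]; omega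
        · simp only [if_neg h0]; omega
      rw [Finset.sum_congr rfl this, ← Finset.sum_mul, hbinom]
    · rw [if_neg hk1]
      by_cases hk2 : k = B.card + 2
      · rw [if_pos hk2]
        set v : Finset (Fin m) → ℝ := fun D => (c - x) ^ D.card * x ^ (A.card - D.card) * w
          with hv
        have hsplit : ∀ D ∈ A.powerset,
            v D = F D + (if D = A then v D else 0) + (if D = ∅ then v D else 0) := by
          intro D hD
          rw [hF]
          simp only []
          by_cases h1 : D = A
          · subst h1
            simp only [eq_self_iff_true, if_true, if_neg hAe]
            rw [if_neg (by omega : ¬ (k ≤ B.card + 0 + 1))]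
            ring
          · by_cases h2 : D = ∅
            · subst h2
              simp only [eq_self_iff_true, if_true, if_neg h1]
              rw [if_neg (by omega : ¬ (k ≤ B.card + 1 + 0))]
              ring
            · simp only [if_neg h1, if_neg h2]
              rw [if_pos (by omega : k ≤ B.card + 1 + 1)]
              ring
        have hsv : ∑ D ∈ A.powerset, v D =
            (∑ D ∈ A.powerset, F D) + v A + v ∅ := by
          rw [Finset.sum_congr rfl hsplit, Finset.sum_add_distrib, Finset.sum_add_distrib,
            Finset.sum_ite_eq' A.powerset A v, Finset.sum_ite_eq' A.powerset ∅ v,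
            if_pos (Finset.mem_powerset_self A), if_pos (Finset.empty_mem_powerset A)]
        have hsvv : ∑ D ∈ A.powerset, v D = c ^ A.card * w := by
          rw [hv]
          simp only []
          rw [← Finset.sum_mul, hbinom]
        have hvA : v A = (c - x) ^ A.card * w := by rw [hv]; simp
        have hvE : v ∅ = x ^ A.card * w := by rw [hv]; simp
        have := hsv
        rw [hsvv, hvA, hvE] at this
        linarith
      · rw [if_neg hk2]
        apply Finset.sum_eq_zero
        intro D hD
        rw [hF]
        simp only []
        rw [if_neg]
        split_ifs <;> omega


lemma q_upd_eq (i j : Fin n) (p : Fin n → ℝ) (x : ℝ) :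
    q n m k (upd p i j x) = ∑ t : Fin m → Fin n, fib m k i j p x t := by
  rw [q, Finset.sum_filter]
  exact (Finset.sum_fiberwise _ (coll i j) _).symm

lemma fib_bad (i j : Fin n) (hij : i ≠ j) (p : Fin n → ℝ) (x : ℝ)
    (t : Fin m → Fin n) (hbad : ∃ r, t r = j) :
    fib m k i j p x t = 0 := by
  rw [fib]
  apply Finset.sum_eq_zero
  intro s hs
  exfalso
  obtain ⟨r, hr⟩ := hbad
  rw [Finset.mem_filter] at hs
  have := congrFun hs.2 r
  rw [coll, hr] at this
  split_ifs at this with h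
  · exact hij this
  · exact h this

lemma fib_le (i j : Fin n) (hij : i ≠ j) (p : Fin n → ℝ) (hp : ∀ l, 0 ≤ p l)
    (x x' : ℝ) (hx0 : 0 ≤ x) (hxc : x ≤ p i + p j)
    (hx' : x' ∈ Set.uIcc x (p i + p j - x)) (t : Fin m → Fin n) :
    fib m k i j p x t ≤ fib m k i j p x' t := by
  by_cases hbad : ∃ r, t r = j
  · rw [fib_bad i j hij p x t hbad, fib_bad i j hij p x' t hbad]
  · push_neg at hbad
    rw [fib_good i j hij p x t hbad, fib_good i j hij p x' t hbad]
    simp only []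
    have hw : 0 ≤ ∏ r ∈ Finset.univ \ (Finset.univ.filter (fun r => t r = i)), p (t r) :=
      Finset.prod_nonneg (fun r _ => hp (t r))
    split_ifs <;>
      first
      | exact le_refl _
      | exact mul_le_mul_of_nonneg_right
          (by have := L1 (Finset.univ.filter (fun r => t r = i)).card hx0 hxc hx'; linarith) hw

lemma smooth_le (i j : Fin n) (hij : i ≠ j) (p : Fin n → ℝ) (hp : ∀ l, 0 ≤ p l)
    (x x' : ℝ) (hx0 : 0 ≤ x) (hxc : x ≤ p i + p j)
    (hx' : x' ∈ Set.uIcc x (p i + p j - x)) :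
    q n m k (upd p i j x) ≤ q n m k (upd p i j x') := by
  rw [q_upd_eq, q_upd_eq]
  exact Finset.sum_le_sum (fun t _ => fib_le i j hij p hp x x' hx0 hxc hx' t)

lemma smooth_lt (i j : Fin n) (hij : i ≠ j) (p : Fin n → ℝ) (hp : ∀ l, 0 ≤ p l)
    (hkm : k ≤ m) (hk2 : 2 ≤ k)
    (x : ℝ) (hx0 : 0 ≤ x) (hxc : x ≤ p i + p j) (hxne : x ≠ (p i + p j) / 2)
    (hB0 : ∃ B0 : Finset (Fin n), B0.card = k - 2 ∧ i ∉ B0 ∧ j ∉ B0 ∧ ∀ l ∈ B0, 0 < p l) :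
    q n m k (upd p i j x) < q n m k (upd p i j ((p i + p j) / 2)) := by
  obtain ⟨B0, hB0card, hiB0, hjB0, hB0pos⟩ := hB0
  set c : ℝ := p i + p j with hc
  have hmid : c / 2 ∈ Set.uIcc x (c - x) := by
    rw [Set.mem_uIcc]
    rcases le_total x (c/2) with h | h
    · left; constructor <;> linarith
    · right; constructor <;> linarith
  have hm2 : 2 ≤ m := le_trans hk2 hkm
  -- the witness t₀
  set e := B0.orderIsoOfFin hB0card with he
  set t₀ : Fin m → Fin n := fun r =>
    if h : (r : ℕ) < k - 2 then (e ⟨(r : ℕ), h⟩ : Fin n) else i with ht₀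
  have ht₀mem : ∀ (r : Fin m) (h : (r : ℕ) < k - 2), t₀ r ∈ B0 := by
    intro r h
    rw [ht₀]
    simp only [dif_pos h]
    exact (e ⟨(r : ℕ), h⟩).2
  have ht₀i : ∀ (r : Fin m), ¬ ((r : ℕ) < k - 2) → t₀ r = i := by
    intro r h
    rw [ht₀]
    simp only [dif_neg h]
  have hgood : ∀ r, t₀ r ≠ j := by
    intro r
    by_cases h : (r : ℕ) < k - 2
    · intro hj; exact hjB0 (hj ▸ ht₀mem r h)
    · rw [ht₀i r h]; exact hij
  -- A for t₀
  have hmemA : ∀ r : Fin m, r ∈ Finset.univ.filter (fun r => t₀ r = i) ↔ ¬ ((r : ℕ) < k - 2) := by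
    intro r
    rw [Finset.mem_filter]
    constructor
    · rintro ⟨-, hri⟩ h
      exact hiB0 (hri ▸ ht₀mem r h)
    · intro h
      exact ⟨Finset.mem_univ _, ht₀i r h⟩
  set A : Finset (Fin m) := Finset.univ.filter (fun r => t₀ r = i) with hA
  have hr1 : (⟨m - 1, by omega⟩ : Fin m) ∈ A := (hmemA _).2 (by simp; omega)
  have hr2 : (⟨m - 2, by omega⟩ : Fin m) ∈ A := (hmemA _).2 (by simp; omega)
  have hAcard : 2 ≤ A.card := by
    have hne : (⟨m - 1, by omega⟩ : Fin m) ≠ (⟨m - 2, by omega⟩ : Fin m) := by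
      intro h
      have := congrArg (fun r : Fin m => (r : ℕ)) h
      simp at this
      omega
    exact Finset.one_lt_card.2 ⟨_, hr1, _, hr2, hne⟩
  have hAne : A ≠ ∅ := by
    intro h
    rw [h] at hr1
    exact absurd hr1 (Finset.notMem_empty _)
  -- B for t₀ equals B0
  have hBeq : (Finset.univ \ A).image t₀ = B0 := by
    apply Finset.Subset.antisymm
    · intro b hb
      rw [Finset.mem_image] at hb
      obtain ⟨r, hr, hrb⟩ := hb
      rw [Finset.mem_sdiff, hmemA] at hr
      have h : (r : ℕ) < k - 2 := by by_contra h; exact hr.2 h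
      exact hrb ▸ ht₀mem r h
    · intro b hb
      obtain ⟨d, hd⟩ := (e.surjective ⟨b, hb⟩)
      have hdm : (d : ℕ) < m := by omega
      rw [Finset.mem_image]
      refine ⟨⟨(d : ℕ), hdm⟩, ?_, ?_⟩
      · rw [Finset.mem_sdiff, hmemA]
        simp only [Finset.mem_univ, true_and]
        intro h
        exact h d.2
      · have hlt : ((⟨(d : ℕ), hdm⟩ : Fin m) : ℕ) < k - 2 := d.2
        show (if h : ((⟨(d : ℕ), hdm⟩ : Fin m) : ℕ) < k - 2
            then (e ⟨((⟨(d : ℕ), hdm⟩ : Fin m) : ℕ), h⟩ : Fin n) else i) = b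
        rw [dif_pos hlt]
        have hde : (⟨((⟨(d : ℕ), hdm⟩ : Fin m) : ℕ), hlt⟩ : Fin (k - 2)) = d := Fin.ext rfl
        rw [hde, hd]
  have hwpos : 0 < ∏ r ∈ Finset.univ \ A, p (t₀ r) := by
    apply Finset.prod_pos
    intro r hr
    rw [Finset.mem_sdiff, hmemA] at hr
    have h : (r : ℕ) < k - 2 := by by_contra h; exact hr.2 h
    exact hB0pos _ (ht₀mem r h)
  -- strict inequality at t₀
  have hstrict : fib m k i j p x t₀ < fib m k i j p (c/2) t₀ := by
    rw [fib_good i j hij p x t₀ hgood, fib_good i j hij p (c/2) t₀ hgood]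
    simp only []
    rw [← hA, hBeq, hB0card]
    rw [if_neg hAne, if_neg hAne, if_neg (by omega : ¬ k ≤ k - 2 + 1),
      if_neg (by omega : ¬ k ≤ k - 2 + 1), if_pos (by omega : k = k - 2 + 2),
      if_pos (by omega : k = k - 2 + 2)]
    apply mul_lt_mul_of_pos_right _ hwpos
    have := L1strict A.card hAcard hx0 hxc hxne
    linarith
  rw [q_upd_eq, q_upd_eq]
  apply Finset.sum_lt_sum
  · exact fun t _ => fib_le i j hij p hp x (c/2) hx0 hxc hmid t
  · exact ⟨t₀, Finset.mem_univ _, hstrict⟩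

lemma upd_self (i j : Fin n) (hij : i ≠ j) (p : Fin n → ℝ) : upd p i j (p i) = p := by
  funext l
  rw [upd]
  split_ifs with h1 h2
  · rw [h1]
  · rw [h2]; ring
  · rfl

lemma sum_upd (i j : Fin n) (hij : i ≠ j) (p : Fin n → ℝ) (x : ℝ) :
    ∑ l, upd p i j x l = ∑ l, p l := by
  have key : ∀ f : Fin n → ℝ,
      ∑ l, f l = f i + (f j + ∑ l ∈ (Finset.univ.erase i).erase j, f l) := by
    intro f
    rw [← Finset.add_sum_erase _ f (Finset.mem_univ i)]
    congr 1
    rw [← Finset.add_sum_erase _ f (Finset.mem_erase.2 ⟨hij.symm, Finset.mem_univ j⟩)]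
  rw [key (upd p i j x), key p]
  have h1 : upd p i j x i = x := by rw [upd, if_pos rfl]
  have h2 : upd p i j x j = p i + p j - x := by rw [upd, if_neg hij.symm, if_pos rfl]
  have h3 : ∑ l ∈ (Finset.univ.erase i).erase j, upd p i j x l
      = ∑ l ∈ (Finset.univ.erase i).erase j, p l := by
    apply Finset.sum_congr rfl
    intro l hl
    rw [Finset.mem_erase, Finset.mem_erase] at hl
    rw [upd, if_neg hl.2.1, if_neg hl.1]
  rw [h1, h2, h3]
  ring

lemma q_le_uniform (hn : 1 ≤ n) : ∀ (N : ℕ) (p : Fin n → ℝ),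
    (Finset.univ.filter (fun l => p l ≠ 1/(n:ℝ))).card ≤ N → (∀ l, 0 ≤ p l) →
    ∑ l, p l = 1 → q n m k p ≤ q n m k (fun _ => 1/(n:ℝ)) := by
  have hnpos : (0:ℝ) < (n:ℝ) := by exact_mod_cast hn
  have hsn : ∑ _l : Fin n, (1/(n:ℝ)) = 1 := by
    rw [Finset.sum_const, Finset.card_univ, Fintype.card_fin, nsmul_eq_mul]
    field_simp
  intro N
  induction N with
  | zero =>
    intro p hcard hp hsum
    have hfe : Finset.univ.filter (fun l => p l ≠ 1/(n:ℝ)) = ∅ :=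
      Finset.card_eq_zero.1 (Nat.le_zero.1 hcard)
    have hall : ∀ l, p l = 1/(n:ℝ) := by
      intro l
      by_contra h
      have : l ∈ Finset.univ.filter (fun l => p l ≠ 1/(n:ℝ)) :=
        Finset.mem_filter.2 ⟨Finset.mem_univ _, h⟩
      rw [hfe] at this
      exact absurd this (Finset.notMem_empty _)
    rw [show p = (fun _ => 1/(n:ℝ)) from funext hall]
  | succ N ih =>
    intro p hcard hp hsum
    by_cases hall : ∀ l, p l = 1/(n:ℝ)
    · rw [show p = (fun _ => 1/(n:ℝ)) from funext hall]
    · push_neg at hall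
      have hex_hi : ∃ i, 1/(n:ℝ) < p i := by
        by_contra h
        push_neg at h
        obtain ⟨l, hl⟩ := hall
        have : ∑ l, p l < ∑ _l : Fin n, (1/(n:ℝ)) :=
          Finset.sum_lt_sum (fun i _ => h i) ⟨l, Finset.mem_univ l, lt_of_le_of_ne (h l) hl⟩
        rw [hsum, hsn] at this
        exact lt_irrefl 1 this
      have hex_lo : ∃ j, p j < 1/(n:ℝ) := by
        by_contra h
        push_neg at h
        obtain ⟨l, hl⟩ := hall
        have : ∑ _l : Fin n, (1/(n:ℝ)) < ∑ l, p l :=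
          Finset.sum_lt_sum (fun i _ => h i) ⟨l, Finset.mem_univ l, lt_of_le_of_ne (h l) (Ne.symm hl)⟩
        rw [hsum, hsn] at this
        exact lt_irrefl 1 this
      obtain ⟨i, hi⟩ := hex_hi
      obtain ⟨j, hj⟩ := hex_lo
      have hij : i ≠ j := by intro h; rw [h] at hi; linarith
      set p' := upd p i j (1/(n:ℝ)) with hp'
      have hstep : q n m k p ≤ q n m k p' := by
        conv_lhs => rw [← upd_self i j hij p]
        apply smooth_le i j hij p hp
        · exact hp i
        · linarith [hp j]
        · rw [Set.mem_uIcc]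
          right
          constructor <;> linarith
      have hp'i : p' i = 1/(n:ℝ) := by rw [hp', upd, if_pos rfl]
      have hp'j : p' j = p i + p j - 1/(n:ℝ) := by rw [hp', upd, if_neg hij.symm, if_pos rfl]
      have hp'other : ∀ l, l ≠ i → l ≠ j → p' l = p l := by
        intro l h1 h2
        rw [hp', upd, if_neg h1, if_neg h2]
      have hp'nonneg : ∀ l, 0 ≤ p' l := by
        intro l
        by_cases h1 : l = i
        · rw [h1, hp'i]; positivity
        · by_cases h2 : l = j
          · rw [h2, hp'j]; linarith [hp j]
          · rw [hp'other l h1 h2]; exact hp l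
      have hp'sum : ∑ l, p' l = 1 := by rw [hp', sum_upd i j hij p]; exact hsum
      have hsubset : Finset.univ.filter (fun l => p' l ≠ 1/(n:ℝ)) ⊆
          (Finset.univ.filter (fun l => p l ≠ 1/(n:ℝ))).erase i := by
        intro l hl
        rw [Finset.mem_filter] at hl
        have hli : l ≠ i := by
          intro h
          rw [h, hp'i] at hl
          exact hl.2 rfl
        rw [Finset.mem_erase, Finset.mem_filter]
        refine ⟨hli, Finset.mem_univ _, ?_⟩
        by_cases h2 : l = j
        · rw [h2]; exact ne_of_lt hj
        · rw [← hp'other l hli h2]; exact hl.2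
      have hcard' : (Finset.univ.filter (fun l => p' l ≠ 1/(n:ℝ))).card ≤ N := by
        have h1 := Finset.card_le_card hsubset
        have h2 := Finset.card_erase_le (s := Finset.univ.filter (fun l => p l ≠ 1/(n:ℝ))) (a := i)
        have h3 : i ∈ Finset.univ.filter (fun l => p l ≠ 1/(n:ℝ)) :=
          Finset.mem_filter.2 ⟨Finset.mem_univ _, ne_of_gt hi⟩
        rw [Finset.card_erase_of_mem h3] at h1
        omega
      exact le_trans hstep (ih p' hcard' hp'nonneg hp'sum)

lemma q_uniform_pos (hn : 1 ≤ n) (hkn : k ≤ n) (hkm : k ≤ m) :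
    0 < q n m k (fun _ => 1/(n:ℝ)) := by
  have hnpos : (0:ℝ) < (n:ℝ) := by exact_mod_cast hn
  rw [q]
  apply Finset.sum_pos
  · intro s _
    apply Finset.prod_pos
    intro r _
    positivity
  · -- there is a function with at least k distinct values
    set s₀ : Fin m → Fin n := fun r => ⟨min (r : ℕ) (k - 1), by omega⟩ with hs₀
    refine ⟨s₀, Finset.mem_filter.2 ⟨Finset.mem_univ _, ?_⟩⟩
    rcases Nat.eq_zero_or_pos k with hk0 | hkpos
    · rw [hk0]; exact Nat.zero_le _
    have hsub : (Finset.univ : Finset (Fin k)).image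
        (fun l : Fin k => (⟨(l : ℕ), lt_of_lt_of_le l.2 hkn⟩ : Fin n)) ⊆
        Finset.univ.image s₀ := by
      intro b hb
      rw [Finset.mem_image] at hb ⊢
      obtain ⟨l, _, hl⟩ := hb
      refine ⟨⟨(l : ℕ), lt_of_lt_of_le l.2 hkm⟩, Finset.mem_univ _, ?_⟩
      rw [← hl, hs₀]
      apply Fin.ext
      simp
      omega
    have hinj : Function.Injective
        (fun l : Fin k => (⟨(l : ℕ), lt_of_lt_of_le l.2 hkn⟩ : Fin n)) := by
      intro a b hab
      have := congrArg (fun z : Fin n => (z : ℕ)) hab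
      exact Fin.ext this
    have := Finset.card_le_card hsub
    rw [Finset.card_image_of_injective _ hinj, Finset.card_univ, Fintype.card_fin] at this
    exact this

lemma q_zero_of_small_support (p : Fin n → ℝ)
    (hsupp : (Finset.univ.filter (fun l => p l ≠ 0)).card < k) :
    q n m k p = 0 := by
  rw [q]
  apply Finset.sum_eq_zero
  intro s hs
  rw [Finset.mem_filter] at hs
  by_cases hz : ∃ r, p (s r) = 0
  · obtain ⟨r, hr⟩ := hz
    exact Finset.prod_eq_zero (Finset.mem_univ r) hr
  · exfalso
    push_neg at hz
    have hsub : Finset.univ.image s ⊆ Finset.univ.filter (fun l => p l ≠ 0) := by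
      intro b hb
      rw [Finset.mem_image] at hb
      obtain ⟨r, _, hr⟩ := hb
      exact Finset.mem_filter.2 ⟨Finset.mem_univ _, hr ▸ hz r⟩
    have := le_trans hs.2 (Finset.card_le_card hsub)
    omega

/-- The uniform vector maximises the probability of seeing at least `k` distinct values among
`m` i.i.d. samples, and when `n, m ≥ k ≥ 2` it is the unique maximiser. -/
theorem uniform_maximises_distinct_values (n m k : ℕ) (hn : 1 ≤ n)
    (p : Fin n → ℝ) (hp : ∀ i, 0 ≤ p i) (hsum : ∑ i, p i = 1) :
    q n m k p ≤ q n m k (fun _ => 1 / (n : ℝ)) ∧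
    (k ≤ n → k ≤ m → 2 ≤ k → q n m k p = q n m k (fun _ => 1 / (n : ℝ)) →
      p = fun _ => 1 / (n : ℝ)) := by
  have hnpos : (0:ℝ) < (n:ℝ) := by exact_mod_cast hn
  constructor
  · exact q_le_uniform hn _ p le_rfl hp hsum
  · intro hkn hkm hk2 heq
    by_contra hne
    have hall : ¬ ∀ l, p l = 1/(n:ℝ) := fun h => hne (funext h)
    push_neg at hall
    -- support must be large
    have hsupp : k ≤ (Finset.univ.filter (fun l => p l ≠ 0)).card := by
      by_contra h
      push_neg at h
      have h0 := q_zero_of_small_support (m := m) p h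
      have hpos := q_uniform_pos (m := m) hn hkn hkm
      rw [← heq, h0] at hpos
      exact lt_irrefl 0 hpos
    -- find i, j with p i > 1/n > p j
    have hsn : ∑ _l : Fin n, (1/(n:ℝ)) = 1 := by
      rw [Finset.sum_const, Finset.card_univ, Fintype.card_fin, nsmul_eq_mul]
      field_simp
    have hex_hi : ∃ i, 1/(n:ℝ) < p i := by
      by_contra h
      push_neg at h
      obtain ⟨l, hl⟩ := hall
      have : ∑ l, p l < ∑ _l : Fin n, (1/(n:ℝ)) :=
        Finset.sum_lt_sum (fun i _ => h i) ⟨l, Finset.mem_univ l, lt_of_le_of_ne (h l) hl⟩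
      rw [hsum, hsn] at this
      exact lt_irrefl 1 this
    have hex_lo : ∃ j, p j < 1/(n:ℝ) := by
      by_contra h
      push_neg at h
      obtain ⟨l, hl⟩ := hall
      have : ∑ _l : Fin n, (1/(n:ℝ)) < ∑ l, p l :=
        Finset.sum_lt_sum (fun i _ => h i) ⟨l, Finset.mem_univ l, lt_of_le_of_ne (h l) (Ne.symm hl)⟩
      rw [hsum, hsn] at this
      exact lt_irrefl 1 this
    obtain ⟨i, hi⟩ := hex_hi
    obtain ⟨j, hj⟩ := hex_lo
    have hij : i ≠ j := by intro h; rw [h] at hi; linarith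
    -- find B0
    obtain ⟨B0, hB0sub, hB0card⟩ := Finset.exists_subset_card_eq
      (s := ((Finset.univ.filter (fun l => p l ≠ 0)).erase i).erase j) (n := k - 2) (by
        have h1 := Finset.pred_card_le_card_erase
          (s := (Finset.univ.filter (fun l => p l ≠ 0)).erase i) (a := j)
        have h2 := Finset.pred_card_le_card_erase
          (s := Finset.univ.filter (fun l => p l ≠ 0)) (a := i)
        omega)
    have hiB0 : i ∉ B0 := by
      intro h
      have := hB0sub h
      rw [Finset.mem_erase, Finset.mem_erase] at this
      exact this.2.1 rfl
    have hjB0 : j ∉ B0 := by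
      intro h
      have := hB0sub h
      rw [Finset.mem_erase] at this
      exact this.1 rfl
    have hB0pos : ∀ l ∈ B0, 0 < p l := by
      intro l hl
      have := hB0sub hl
      rw [Finset.mem_erase, Finset.mem_erase, Finset.mem_filter] at this
      exact lt_of_le_of_ne (hp l) (Ne.symm this.2.2.2)
    -- strict smoothing
    have hlt : q n m k p < q n m k (upd p i j ((p i + p j) / 2)) := by
      conv_lhs => rw [← upd_self i j hij p]
      apply smooth_lt i j hij p hp hkm hk2
      · exact hp i
      · linarith [hp j]
      · intro h
        have : p i = p j := by linarith
        linarith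
      · exact ⟨B0, hB0card, hiB0, hjB0, hB0pos⟩
    have hle : q n m k (upd p i j ((p i + p j) / 2)) ≤ q n m k (fun _ => 1/(n:ℝ)) := by
      apply q_le_uniform hn _ _ le_rfl
      · intro l
        rw [upd]
        split_ifs with h1 h2
        · linarith [hp i, hp j]
        · linarith [hp i, hp j]
        · exact hp l
      · rw [sum_upd i j hij p]; exact hsum
    rw [heq] at hlt
    linarith
end
end
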